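/- arXiv:1911.12220 — 9 statements merged into one kernel-verified Lean document; each statement's English description precedes it below -/
import Mathlib

section
/- Let p be a prime and let α ≥ 0 and R ≥ 0 be integers. Let (Λ_R(α,β))_{α−R ≤ β ≤ α} be the unique rational numbers satisfying ∑_{β=α−R}^{α} Λ_R(α,β)·C((p−1)X+α, α−β) = C(R−X, R) in ℚ[X]. Then every Λ_R(α,β) is a p-adic integer, i.e. v_p(Λ_R(α,β)) ≥ 0 for all β with α−R ≤ β ≤ α. -/
open Polynomial

/-- The polynomial binomial coefficient `C(f, m) = f(f-1)⋯(f-m+1)/m!`. -/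
noncomputable def polyBinom (f : Polynomial ℚ) (m : ℕ) : Polynomial ℚ :=
  Polynomial.C ((m.factorial : ℚ))⁻¹ * ∏ i ∈ Finset.range m, (f - Polynomial.C (i : ℚ))

lemma prod_range_natCast_sub (S : Type*) [CommRing S] (n m : ℕ) :
    ∏ i ∈ Finset.range m, ((n : S) - (i : S)) = (m.factorial : S) * (n.choose m : S) := by
  have hZ : ∏ i ∈ Finset.range m, ((n : ℤ) - (i : ℤ)) = (m.factorial : ℤ) * (n.choose m : ℤ) := by
    rcases lt_or_ge n m with h | h
    · rw [Finset.prod_eq_zero (Finset.mem_range.mpr h) (by simp),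
        Nat.choose_eq_zero_of_lt h]
      simp
    · have he : ∀ i ∈ Finset.range m, ((n : ℤ) - (i : ℤ)) = ((n - i : ℕ) : ℤ) := by
        intro i hi
        have : i ≤ n := le_trans (Finset.mem_range.mp hi).le h
        push_cast [this]
        ring
      rw [Finset.prod_congr rfl he, ← Nat.cast_prod, ← Nat.descFactorial_eq_prod_range,
        Nat.descFactorial_eq_factorial_mul_choose]
      push_cast
      ring
  have h2 := congrArg (Int.cast : ℤ → S) hZ
  push_cast at h2
  exact h2

lemma fwdDiff_iter_ratCast (f : ℕ → ℤ) (n y : ℕ) :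
    (fwdDiff 1)^[n] (fun x => (f x : ℚ)) y = (((fwdDiff 1)^[n] f y : ℤ) : ℚ) := by
  rw [fwdDiff_iter_eq_sum_shift, fwdDiff_iter_eq_sum_shift]
  push_cast [zsmul_eq_mul]
  rfl

lemma fwdDiff_iter_choose_zero_rat (m n : ℕ) :
    (fwdDiff 1)^[n] (fun x : ℕ => (x.choose m : ℚ)) 0 = if n = m then 1 else 0 := by
  have h : (fun x : ℕ => (x.choose m : ℚ))
      = fun x => (((fun x : ℕ => (x.choose m : ℤ)) x : ℤ) : ℚ) := by
    push_cast; rfl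
  rw [h, fwdDiff_iter_ratCast, fwdDiff_iter_choose_zero]
  split <;> simp

lemma norm_prod_range_sub_le (p : ℕ) [hp : Fact p.Prime] (m : ℕ) (x : ℤ_[p]) :
    ‖∏ i ∈ Finset.range m, (x - (i : ℤ_[p]))‖ ≤ ‖(m.factorial : ℤ_[p])‖ := by
  let f : ℤ_[p] → ℤ_[p] := fun y => ∏ i ∈ Finset.range m, (y - (i : ℤ_[p]))
  change ‖f x‖ ≤ _
  have hC : (m.factorial : ℤ_[p]) ≠ 0 := Nat.cast_ne_zero.mpr m.factorial_ne_zero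
  have hf : ContinuousAt f x := by
    apply Continuous.continuousAt
    exact continuous_finset_prod _ fun i _ => continuous_id.sub continuous_const
  obtain ⟨n, hn⟩ : ∃ n : ℕ, ‖f x - f n‖ ≤ ‖(m.factorial : ℤ_[p])‖ := by
    obtain ⟨δ, hδp, hδ⟩ := Metric.continuousAt_iff.mp hf _ (norm_pos_iff.mpr hC)
    obtain ⟨n, hn'⟩ := PadicInt.denseRange_natCast.exists_dist_lt x hδp
    simpa only [← dist_eq_norm_sub'] using ⟨n, (hδ (dist_comm x n ▸ hn')).le⟩
  refine sub_add_cancel (f x) _ ▸ (IsUltrametricDist.norm_add_le_max _ (f n)).trans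
    (max_le hn ?_)
  have hfn : f n = ((m.factorial : ℤ_[p])) * ((n.choose m : ℕ) : ℤ_[p]) := by
    simpa using prod_range_natCast_sub ℤ_[p] n m
  rw [hfn, norm_mul]
  exact mul_le_of_le_one_right (norm_nonneg _) (PadicInt.norm_le_one _)

lemma polyBinom_eval_natCast (f : Polynomial ℚ) (m : ℕ) (x : ℚ) (k : ℕ)
    (h : f.eval x = (k : ℚ)) :
    (polyBinom f m).eval x = (k.choose m : ℚ) := by
  simp only [polyBinom, eval_mul, eval_C, eval_prod, eval_sub]
  rw [Finset.prod_congr rfl (fun i _ => by rw [h]), prod_range_natCast_sub,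
    inv_mul_cancel_left₀ (by exact_mod_cast m.factorial_ne_zero)]

/-- Let `p` be a prime, `α ≥ 0`, `R ≥ 0` integers, and let
`(Λ β)_{α-R ≤ β ≤ α}` be the unique rationals with
`∑_{β=α-R}^{α} Λ_R(α,β)·C((p-1)X+α, α-β) = C(R-X, R)` in `ℚ[X]`.
Then every `Λ_R(α,β)` is a `p`-adic integer: `v_p(Λ_R(α,β)) ≥ 0`. -/
theorem lambda_family_padic_integer (p : ℕ) (hp : p.Prime) (α R : ℤ)
    (hα : 0 ≤ α) (hR : 0 ≤ R) (Λ : ℤ → ℚ)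
    (hΛ : ∑ β ∈ Finset.Icc (α - R) α,
        Polynomial.C (Λ β) *
          polyBinom (Polynomial.C ((p : ℚ) - 1) * Polynomial.X + Polynomial.C (α : ℚ))
            (α - β).toNat
      = polyBinom (Polynomial.C (R : ℚ) - Polynomial.X) R.toNat) :
    ∀ β ∈ Finset.Icc (α - R) α, 0 ≤ padicValRat p (Λ β) := by
  haveI : Fact p.Prime := ⟨hp⟩
  set R' := R.toNat with hR'
  have hRR' : (R' : ℤ) = R := Int.toNat_of_nonneg hR
  have hp1 : ((p : ℚ) - 1) ≠ 0 := by
    have : (2 : ℚ) ≤ p := by exact_mod_cast hp.two_le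
    linarith
  set Q : ℕ → ℚ := fun k =>
    ((R'.factorial : ℚ))⁻¹ *
      ∏ i ∈ Finset.range R', ((R : ℚ) - ((k : ℚ) - α) / ((p : ℚ) - 1) - i) with hQdef
  -- Step 1 : evaluate the polynomial identity at the points `x_k = (k - α)/(p-1)`
  have hstep1 : ∀ k : ℕ,
      ∑ j ∈ Finset.range (R' + 1), Λ (α - j) * (k.choose j : ℚ) = Q k := by
    intro k
    have harg : (Polynomial.C ((p : ℚ) - 1) * Polynomial.X + Polynomial.C (α : ℚ)).eval
        (((k : ℚ) - α) / ((p : ℚ) - 1)) = (k : ℚ) := by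
      simp only [eval_add, eval_mul, eval_C, eval_X]
      field_simp
      ring
    have h1 := congrArg (Polynomial.eval (((k : ℚ) - α) / ((p : ℚ) - 1))) hΛ
    rw [Polynomial.eval_finset_sum] at h1
    have h2 : ∀ β ∈ Finset.Icc (α - R) α,
        (Polynomial.C (Λ β) *
          polyBinom (Polynomial.C ((p : ℚ) - 1) * Polynomial.X + Polynomial.C (α : ℚ))
            (α - β).toNat).eval (((k : ℚ) - α) / ((p : ℚ) - 1))
        = Λ β * (k.choose (α - β).toNat : ℚ) := by
      intro β _
      rw [eval_mul, eval_C, polyBinom_eval_natCast _ _ _ _ harg]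
    rw [Finset.sum_congr rfl h2] at h1
    have h3 : ∑ β ∈ Finset.Icc (α - R) α, Λ β * (k.choose (α - β).toNat : ℚ)
        = ∑ j ∈ Finset.range (R' + 1), Λ (α - (j : ℤ)) * (k.choose j : ℚ) := by
      refine Finset.sum_nbij' (fun β => (α - β).toNat) (fun j => α - (j : ℤ)) ?_ ?_ ?_ ?_ ?_ <;>
        intro a ha <;>
        simp only [Finset.mem_Icc, Finset.mem_range] at ha ⊢
      · omega
      · omega
      · omega
      · omega
      · have hb : α - ((α - a).toNat : ℤ) = a := by omega
        rw [hb]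
    rw [h3] at h1
    rw [h1]
    simp only [polyBinom, eval_mul, eval_C, eval_prod, eval_sub, eval_X]
    rfl
  -- Step 2 : extract `Λ (α - m)` as an iterated forward difference of `Q`
  have hstep2 : ∀ m, m < R' + 1 → Λ (α - m) = (fwdDiff 1)^[m] Q 0 := by
    intro m hm
    have hfun : (∑ j ∈ Finset.range (R' + 1),
        (Λ (α - j) • fun k : ℕ => (k.choose j : ℚ))) = Q := by
      funext k
      simpa [Finset.sum_apply, smul_eq_mul] using hstep1 k
    rw [← hfun, fwdDiff_iter_finset_sum]
    simp only [Finset.sum_apply, fwdDiff_iter_const_smul, Pi.smul_apply,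
      fwdDiff_iter_choose_zero_rat, smul_eq_mul, mul_ite, mul_one, mul_zero]
    rw [Finset.sum_ite_eq (Finset.range (R' + 1)) m (fun j => Λ (α - j))]
    simp [Finset.mem_range.mpr hm]
  -- Step 3 : each `Q k` is a p-adic integer
  have hstep3 : ∀ k : ℕ, padicNorm p (Q k) ≤ 1 := by
    intro k
    have key : ‖((Q k : ℚ) : ℚ_[p])‖ ≤ 1 := by
      have hp1' : ‖((p : ℚ_[p]) - 1)‖ = 1 := by
        have h1 : ((p : ℚ_[p]) - 1) = ((p - 1 : ℤ) : ℚ_[p]) := by push_cast; ring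
        rw [h1]
        refine le_antisymm (Padic.norm_int_le_one _) ?_
        by_contra hlt
        push_neg at hlt
        have hd := (Padic.norm_intCast_lt_one_iff (k := (p - 1 : ℤ))).mp hlt
        have h2 := Int.le_of_dvd (by have h2 := hp.two_le; omega : (0:ℤ) < (p:ℤ) - 1) hd
        omega
      set z : ℚ := (R : ℚ) - ((k : ℚ) - α) / ((p : ℚ) - 1) with hz
      have hznorm : ‖((z : ℚ) : ℚ_[p])‖ ≤ 1 := by
        have hcast : ((z : ℚ) : ℚ_[p])
            = ((R : ℤ) : ℚ_[p]) + (-(((k - α : ℤ) : ℚ_[p])) / ((p : ℚ_[p]) - 1)) := by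
          rw [hz]; push_cast; ring
        rw [hcast]
        refine le_trans (Padic.nonarchimedean _ _) (max_le (Padic.norm_int_le_one _) ?_)
        rw [norm_div, hp1', div_one, norm_neg]
        exact Padic.norm_int_le_one _
      set w : ℤ_[p] := ⟨((z : ℚ) : ℚ_[p]), hznorm⟩ with hw
      have hprod : ((∏ i ∈ Finset.range R', (w - (i : ℤ_[p])) : ℤ_[p]) : ℚ_[p])
          = ∏ i ∈ Finset.range R', (((z : ℚ) : ℚ_[p]) - (i : ℚ_[p])) := by
        rw [show ((∏ i ∈ Finset.range R', (w - (i : ℤ_[p])) : ℤ_[p]) : ℚ_[p])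
            = (PadicInt.Coe.ringHom : ℤ_[p] →+* ℚ_[p])
              (∏ i ∈ Finset.range R', (w - (i : ℤ_[p]))) from rfl, map_prod]
        refine Finset.prod_congr rfl fun i _ => ?_
        rw [map_sub]
        simp only [hw, PadicInt.coe_natCast]
        norm_num
        rfl
      have hQz : Q k = ((R'.factorial : ℚ))⁻¹ * ∏ i ∈ Finset.range R', (z - i) := rfl
      have hQcast : ((Q k : ℚ) : ℚ_[p])
          = ((R'.factorial : ℚ_[p]))⁻¹
            * ((∏ i ∈ Finset.range R', (w - (i : ℤ_[p])) : ℤ_[p]) : ℚ_[p]) := by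
        rw [hQz, hprod]
        rw [show (((((R'.factorial : ℚ))⁻¹ * ∏ i ∈ Finset.range R', (z - i)) : ℚ) : ℚ_[p])
            = (Rat.castHom ℚ_[p]) (((R'.factorial : ℚ))⁻¹ * ∏ i ∈ Finset.range R', (z - i))
          from rfl, map_mul, map_inv₀, map_prod]
        simp [map_sub]
      rw [hQcast, norm_mul, norm_inv]
      have hfac : ‖((∏ i ∈ Finset.range R', (w - (i : ℤ_[p])) : ℤ_[p]) : ℚ_[p])‖
          ≤ ‖(R'.factorial : ℚ_[p])‖ := by
        rw [← PadicInt.norm_def]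
        refine le_trans (norm_prod_range_sub_le p R' w) ?_
        rw [PadicInt.norm_def, PadicInt.coe_natCast]
      have hfacpos : (0 : ℝ) < ‖(R'.factorial : ℚ_[p])‖ := by
        rw [norm_pos_iff]
        exact_mod_cast R'.factorial_ne_zero
      calc ‖(R'.factorial : ℚ_[p])‖⁻¹ * ‖((∏ i ∈ Finset.range R', (w - (i : ℤ_[p])) : ℤ_[p]) : ℚ_[p])‖
          ≤ ‖(R'.factorial : ℚ_[p])‖⁻¹ * ‖(R'.factorial : ℚ_[p])‖ :=
            mul_le_mul_of_nonneg_left hfac (by positivity)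
        _ = 1 := inv_mul_cancel₀ (ne_of_gt hfacpos)
    rw [Padic.eq_padicNorm] at key
    exact_mod_cast key
  -- Step 4 : `Λ (α - m)` is a p-adic integer
  have hstep4 : ∀ m, m < R' + 1 → padicNorm p (Λ (α - m)) ≤ 1 := by
    intro m hm
    rw [hstep2 m hm, fwdDiff_iter_eq_sum_shift]
    refine padicNorm.sum_le' (fun i _ => ?_) zero_le_one
    rw [zsmul_eq_mul, padicNorm.mul]
    exact mul_le_one₀ (padicNorm.of_int _) (padicNorm.nonneg _) (hstep3 _)
  -- Conclusion
  intro β hβ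
  rw [Finset.mem_Icc] at hβ
  have hb : β = α - ((α - β).toNat : ℤ) := by omega
  have hm : (α - β).toNat < R' + 1 := by omega
  have h1 := hstep4 _ hm
  rw [← hb] at h1
  by_cases h0 : Λ β = 0
  · simp [h0]
  · rw [padicNorm.eq_zpow_of_nonzero h0] at h1
    have hp1q : (1 : ℚ) < p := by exact_mod_cast hp.one_lt
    have h2 : (p : ℚ) ^ (-padicValRat p (Λ β)) ≤ (p : ℚ) ^ (0 : ℤ) := by simpa using h1
    have h3 := (zpow_le_zpow_iff_right₀ hp1q).mp h2
    omega
end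

section
/- Let p be a prime and let r, α, ϱ' be integers with r ≥ α ≥ ϱ' ≥ 1, and let i ∈ {1, …, ϱ'}. Then ∑_{l=α−ϱ'}^{α} Λ_{ϱ'}(α,l)·binom(r, α−l)·binom(r−α+l, i(p−1)+l) = 0, where the binomial coefficients of natural numbers are the usual ones (equal to 0 when the lower entry exceeds the upper entry). -/
open Polynomial

lemma prod_range_sub_eq_descFactorial (n m : ℕ) :
    ∏ j ∈ Finset.range m, ((n : ℚ) - j) = (n.descFactorial m : ℚ) := by
  have h : ∀ x : ℚ, (descPochhammer ℚ m).eval x = ∏ j ∈ Finset.range m, (x - j) := by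
    intro x
    induction m with
    | zero => simp
    | succ k ih => rw [descPochhammer_succ_right, Finset.prod_range_succ, ← ih]; simp
  rw [← h, descPochhammer_eval_eq_descFactorial]

lemma polyBinom_eval_nat (f : Polynomial ℚ) (m n : ℕ) (x : ℚ)
    (hf : f.eval x = (n : ℚ)) :
    (polyBinom f m).eval x = (n.choose m : ℚ) := by
  have : (polyBinom f m).eval x
      = ((m.factorial : ℚ))⁻¹ * ∏ j ∈ Finset.range m, ((n : ℚ) - j) := by
    simp [polyBinom, eval_prod, hf]
  rw [this, prod_range_sub_eq_descFactorial,
    Nat.descFactorial_eq_factorial_mul_choose, Nat.cast_mul]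
  rw [inv_mul_cancel_left₀ (by exact_mod_cast m.factorial_ne_zero)]

lemma choose_split (r α l K : ℕ) (hl : l ≤ α) (hα : α ≤ r) (hK : α ≤ K) :
    (r.choose (α - l) : ℚ) * ((r - α + l).choose (K - α + l) : ℚ)
      = (r.choose K : ℚ) * (K.choose (α - l) : ℚ) := by
  by_cases h : K ≤ r
  · have := Nat.choose_mul (n := r) (k := K) (s := α - l) (le_trans (Nat.sub_le _ _) hK)
    have e1 : r - (α - l) = r - α + l := by omega
    have e2 : K - (α - l) = K - α + l := by omega
    rw [e1, e2] at this
    exact_mod_cast this.symm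
  · rw [Nat.choose_eq_zero_of_lt (by omega : r - α + l < K - α + l),
      Nat.choose_eq_zero_of_lt (by omega : r < K)]
    simp

/-- Let `p` be a prime and `r ≥ α ≥ ϱ' ≥ 1` integers, and let
`i ∈ {1, …, ϱ'}`.  With `Λ = Λ_{ϱ'}(α, ·)` the unique family satisfying
`∑_{l=α-ϱ'}^{α} Λ_{ϱ'}(α,l)·C((p-1)X+α, α-l) = C(ϱ'-X, ϱ')` in `ℚ[X]`, one has
`∑_{l=α-ϱ'}^{α} Λ_{ϱ'}(α,l)·binom(r, α-l)·binom(r-α+l, i(p-1)+l) = 0`. -/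
theorem lambda_sum_vanishes (p r α ϱ' : ℕ) (hp : p.Prime)
    (h1 : 1 ≤ ϱ') (h2 : ϱ' ≤ α) (h3 : α ≤ r)
    (Λ : ℕ → ℚ)
    (hΛ : ∑ l ∈ Finset.Icc (α - ϱ') α,
        Polynomial.C (Λ l) *
          polyBinom (Polynomial.C ((p : ℚ) - 1) * Polynomial.X + Polynomial.C (α : ℚ))
            (α - l)
      = polyBinom (Polynomial.C (ϱ' : ℚ) - Polynomial.X) ϱ')
    (i : ℕ) (hi1 : 1 ≤ i) (hi2 : i ≤ ϱ') :
    ∑ l ∈ Finset.Icc (α - ϱ') α,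
        Λ l * (r.choose (α - l) : ℚ) * ((r - α + l).choose (i * (p - 1) + l) : ℚ) = 0 := by
  set K : ℕ := i * (p - 1) + α with hKdef
  have H := congrArg (Polynomial.eval (i : ℚ)) hΛ
  rw [Polynomial.eval_finset_sum] at H
  have hf : (Polynomial.C ((p : ℚ) - 1) * Polynomial.X + Polynomial.C (α : ℚ)).eval (i : ℚ)
      = (K : ℚ) := by
    have : ((p - 1 : ℕ) : ℚ) = (p : ℚ) - 1 := by
      rw [Nat.cast_sub hp.one_le]; norm_num
    simp [hKdef, Nat.cast_add, Nat.cast_mul, ← this]; ring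
  have hg : (Polynomial.C (ϱ' : ℚ) - Polynomial.X).eval (i : ℚ) = ((ϱ' - i : ℕ) : ℚ) := by
    rw [Nat.cast_sub hi2]; simp
  have hRHS : (polyBinom (Polynomial.C (ϱ' : ℚ) - Polynomial.X) ϱ').eval (i : ℚ) = 0 := by
    rw [polyBinom_eval_nat _ _ _ _ hg, Nat.choose_eq_zero_of_lt (by omega)]
    simp
  rw [hRHS] at H
  have H' : ∑ l ∈ Finset.Icc (α - ϱ') α, Λ l * (K.choose (α - l) : ℚ) = 0 := by
    rw [← H]
    refine Finset.sum_congr rfl fun l _ => ?_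
    rw [Polynomial.eval_mul, Polynomial.eval_C, polyBinom_eval_nat _ _ K _ hf]
  have key : ∀ l ∈ Finset.Icc (α - ϱ') α,
      Λ l * (r.choose (α - l) : ℚ) * ((r - α + l).choose (i * (p - 1) + l) : ℚ)
        = (r.choose K : ℚ) * (Λ l * (K.choose (α - l) : ℚ)) := by
    intro l hl
    rw [Finset.mem_Icc] at hl
    have hil : i * (p - 1) + l = K - α + l := by omega
    rw [hil, mul_assoc, choose_split r α l K hl.2 h3 (by omega)]
    ring
  rw [Finset.sum_congr rfl key, ← Finset.mul_sum, H', mul_zero]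
end

section
/- Let m ≥ 1, γ ≥ 0 and R ≥ 0 be integers. Then the determinant of the R × R matrix whose (i, j) entry, for 0 ≤ i, j < R, is the binomial coefficient binom(i·m + γ, j), equals m^{R(R−1)/2}. -/
open Finset Polynomial

lemma prod_factorial_fin_eq_det_vandermonde (R : ℕ) :
    (∏ i : Fin R, (Nat.factorial i : ℤ)) =
      (Matrix.vandermonde (fun i : Fin R ↦ (i : ℤ))).det := by
  cases R with
  | zero => simp
  | succ n =>
    rw [Matrix.det_vandermonde_id_eq_superFactorial n, ← Nat.prod_range_succ_factorial n,
      Fin.prod_univ_eq_prod_range (fun i ↦ (Nat.factorial i : ℤ))]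
    push_cast
    rfl

/-- Let `m ≥ 1`, `γ ≥ 0` and `R ≥ 0` be integers. The determinant of the
`R × R` matrix whose `(i, j)` entry (for `0 ≤ i, j < R`) is `binom(i·m + γ, j)` equals
`m^(R(R-1)/2)`. -/
theorem det_binomial_matrix (m γ R : ℕ) (hm : 1 ≤ m) :
    Matrix.det (Matrix.of fun i j : Fin R => ((i.val * m + γ).choose j.val : ℤ))
      = (m : ℤ) ^ (R * (R - 1) / 2) := by
  set v : Fin R → ℤ := fun i ↦ ((i.val * m + γ : ℕ) : ℤ) with hv
  -- step 1: vandermonde det = det of evaluated descPochhammer matrix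
  have h1 : (Matrix.vandermonde v).det =
      (Matrix.of fun i j : Fin R => (descPochhammer ℤ j.val).eval (v i)).det :=
    Matrix.det_eval_matrixOfPolynomials_eq_det_vandermonde v
      (fun i => descPochhammer ℤ i)
      (fun i => descPochhammer_natDegree ℤ i)
      (fun i => monic_descPochhammer ℤ i)
  -- step 2: descPochhammer matrix det = (∏ i!) * choose matrix det
  have h2 : (Matrix.of fun i j : Fin R => (descPochhammer ℤ j.val).eval (v i)).det =
      (∏ i : Fin R, (Nat.factorial i : ℤ)) *
        (Matrix.of fun i j : Fin R => ((i.val * m + γ).choose j.val : ℤ)).det := by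
    convert Matrix.det_mul_row (fun i : Fin R => (Nat.factorial i.val : ℤ)) _
    rw [Matrix.of_apply, hv, descPochhammer_eval_eq_descFactorial ℤ _ _]
    exact_mod_cast congrArg Nat.cast (Nat.descFactorial_eq_factorial_mul_choose _ _)
  -- step 3: compute the vandermonde determinant
  have h3 : (Matrix.vandermonde v).det =
      (m : ℤ) ^ (R * (R - 1) / 2) * (∏ i : Fin R, (Nat.factorial i : ℤ)) := by
    have : (Matrix.vandermonde v).det
        = (Matrix.vandermonde (fun i : Fin R ↦ (i : ℤ) * m)).det := by
      have : v = fun i : Fin R ↦ (i : ℤ) * m + (γ : ℕ) := by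
        funext i; simp [hv]
      rw [this, Matrix.det_vandermonde_add]
    rw [this, Matrix.det_vandermonde]
    rw [prod_factorial_fin_eq_det_vandermonde, Matrix.det_vandermonde]
    have key : ∀ i : Fin R, ∏ j ∈ Finset.Ioi i, ((j : ℤ) * m - (i : ℤ) * m)
        = (m : ℤ) ^ (Finset.Ioi i).card * ∏ j ∈ Finset.Ioi i, ((j : ℤ) - (i : ℤ)) := by
      intro i
      calc ∏ j ∈ Finset.Ioi i, ((j : ℤ) * m - (i : ℤ) * m)
          = ∏ j ∈ Finset.Ioi i, ((m : ℤ) * ((j : ℤ) - (i : ℤ))) :=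
            Finset.prod_congr rfl fun j _ => by ring
        _ = (m : ℤ) ^ (Finset.Ioi i).card * ∏ j ∈ Finset.Ioi i, ((j : ℤ) - (i : ℤ)) := by
            rw [Finset.prod_mul_distrib, Finset.prod_const]
    simp_rw [key]
    rw [Finset.prod_mul_distrib, Finset.prod_pow_eq_pow_sum]
    congr 2
    -- ∑ i : Fin R, card (Ioi i) = R * (R-1) / 2
    have hcard : ∀ i : Fin R, (Finset.Ioi i).card = R - 1 - i.val := by
      intro i; rw [Fin.card_Ioi]
    simp_rw [hcard]
    rw [Fin.sum_univ_eq_sum_range (fun i ↦ R - 1 - i) R]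
    rw [← Finset.sum_range_reflect (fun i ↦ R - 1 - i) R]
    have : ∀ j ∈ Finset.range R, R - 1 - (R - 1 - j) = j := by intro j hj; simp at hj; omega
    rw [Finset.sum_congr rfl this, Finset.sum_range_id]
  -- combine and cancel ∏ i!
  have hF : (∏ i : Fin R, (Nat.factorial i : ℤ)) ≠ 0 := by
    apply Finset.prod_ne_zero_iff.mpr
    intro i _
    exact_mod_cast (Nat.factorial_pos i).ne'
  apply mul_left_cancel₀ hF
  rw [← h2, ← h1, h3]
  ring
end

section
/- Let p > 3 be a prime, let r ≥ 1 be an integer, set ϱ = ⌊(r+1)/(p+1)⌋, let α be an integer with ϱ < α and α(p−1) ≤ r, and set ϱ' = ⌈(r−α)/p⌉ − 1. Then for every integer j ≥ 1 with j(p−1) ≤ α one has v_p(binom(r, α)) < j(p−1) + v_p(binom(r, α−j(p−1))) + v_p(binom(ϱ'+j, j)). -/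
/-! Auxiliary digit-sum lemmas -/

private def dsum (b n : ℕ) : ℕ := (Nat.digits b n).sum

private lemma dsum_mul_add {b : ℕ} (hb : 1 < b) (x y : ℕ) (hy : y < b) :
    dsum b (b * x + y) = dsum b x + y := by
  rcases Nat.eq_zero_or_pos (b * x + y) with h | h
  · have hx : x = 0 := by
      rcases Nat.add_eq_zero.1 h with ⟨h1, h2⟩
      rcases Nat.mul_eq_zero.1 h1 with h | h <;> omega
    have hy0 : y = 0 := by omega
    simp [dsum, hx, hy0]
  · unfold dsum
    rw [Nat.digits_def' hb h, List.sum_cons]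
    have h1 : (b * x + y) % b = y := by
      rw [add_comm, Nat.add_mul_mod_self_left, Nat.mod_eq_of_lt hy]
    have h2 : (b * x + y) / b = x := by
      rw [Nat.mul_add_div (by omega), Nat.div_eq_of_lt hy, Nat.add_zero]
    rw [h1, h2, Nat.add_comm]

private lemma dsum_succ_le {b : ℕ} (hb : 1 < b) : ∀ n, dsum b (n + 1) ≤ dsum b n + 1 := by
  intro n
  induction n using Nat.strong_induction_on with
  | _ n ih =>
    set x := n / b with hx
    set y := n % b with hy
    have hyb : y < b := Nat.mod_lt _ (by omega)
    have hn : n = b * x + y := by rw [hx, hy]; exact (Nat.div_add_mod n b).symm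
    rcases Nat.lt_or_ge (y + 1) b with hc | hc
    · have h1 : n + 1 = b * x + (y + 1) := by omega
      rw [h1, dsum_mul_add hb x (y + 1) hc, hn, dsum_mul_add hb x y hyb]
      omega
    · have hyeq : y + 1 = b := by omega
      have hn0 : 0 < n := by
        rcases Nat.eq_zero_or_pos n with h0 | h0
        · exfalso; rw [h0] at hy; simp at hy; omega
        · exact h0
      have h1 : n + 1 = b * (x + 1) + 0 := by
        have hbx : b * (x + 1) = b * x + (y + 1) := by rw [hyeq]; ring
        omega
      have hxn : x < n := Nat.div_lt_self hn0 hb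
      have h2 : dsum b (n + 1) = dsum b (x + 1) := by
        rw [h1, dsum_mul_add hb (x + 1) 0 (by omega), Nat.add_zero]
      have h3 := ih x hxn
      have h4 : dsum b n = dsum b x + y := by rw [hn, dsum_mul_add hb x y hyb]
      have h5 : 1 ≤ y := by omega
      calc dsum b (n + 1) = dsum b (x + 1) := h2
        _ ≤ dsum b x + 1 := h3
        _ ≤ dsum b x + y := by omega
        _ = dsum b n := h4.symm
        _ ≤ dsum b n + 1 := Nat.le_succ _

private lemma dsum_add_le {b : ℕ} (hb : 1 < b) (x : ℕ) : ∀ y, dsum b (x + y) ≤ dsum b x + y := by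
  intro y
  induction y with
  | zero => simp
  | succ y ih =>
    calc dsum b (x + (y + 1)) = dsum b ((x + y) + 1) := by ring_nf
      _ ≤ dsum b (x + y) + 1 := dsum_succ_le hb _
      _ ≤ dsum b x + y + 1 := by omega

private lemma dsum_pos {b : ℕ} (hb : 1 < b) : ∀ n, 0 < n → 0 < dsum b n := by
  intro n
  induction n using Nat.strong_induction_on with
  | _ n ih =>
    intro hn
    set x := n / b with hx
    set y := n % b with hy
    have hyb : y < b := Nat.mod_lt _ (by omega)
    have hneq : n = b * x + y := by rw [hx, hy]; exact (Nat.div_add_mod n b).symm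
    have h4 : dsum b n = dsum b x + y := by rw [hneq, dsum_mul_add hb x y hyb]
    rcases Nat.eq_zero_or_pos y with h0 | h0
    · have hx0 : 0 < x := by
        rcases Nat.eq_zero_or_pos x with h1 | h1
        · exfalso; rw [h1, h0] at hneq; omega
        · exact h1
      have hxn : x < n := Nat.div_lt_self hn hb
      have := ih x hxn hx0
      omega
    · omega

private lemma dsum_mul_le {b : ℕ} (hb : 1 < b) (c : ℕ) : ∀ j, dsum b (j * c) ≤ dsum b j * c := by
  intro j
  induction j using Nat.strong_induction_on with
  | _ j ih =>
    rcases Nat.eq_zero_or_pos j with h0 | h0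
    · simp [h0, dsum]
    · set u := j / b with hu
      set w := j % b with hw
      have hwb : w < b := Nat.mod_lt _ (by omega)
      have hjeq : j = b * u + w := by rw [hu, hw]; exact (Nat.div_add_mod j b).symm
      have hun : u < j := Nat.div_lt_self h0 hb
      have h1 : j * c = b * (u * c) + w * c := by rw [hjeq]; ring
      have h2 : dsum b (b * (u * c)) = dsum b (u * c) := by
        have := dsum_mul_add hb (u * c) 0 (by omega)
        simpa using this
      have h3 : dsum b j = dsum b u + w := by rw [hjeq, dsum_mul_add hb u w hwb]
      calc dsum b (j * c) = dsum b (b * (u * c) + w * c) := by rw [h1]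
        _ ≤ dsum b (b * (u * c)) + w * c := dsum_add_le hb _ _
        _ = dsum b (u * c) + w * c := by rw [h2]
        _ ≤ dsum b u * c + w * c := by have := ih u hun; omega
        _ = (dsum b u + w) * c := by ring
        _ = dsum b j * c := by rw [h3]

/-- The key reduced inequality: for `N ≥ 1`, `j ≥ 1`,
`v_p(C(N + j(p-1), j(p-1))) < j(p-1) + v_p(C(⌊(N-1)/p⌋ + j, j))` with `p = P+1`. -/
private lemma step2 (P N j : ℕ) (hP : 4 ≤ P) (hp : (P + 1).Prime) (hN : 1 ≤ N) (hj : 1 ≤ j) :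
    padicValNat (P + 1) ((N + j * P).choose (j * P))
      < j * P + padicValNat (P + 1) (((N - 1) / (P + 1) + j).choose j) := by
  haveI : Fact (P + 1).Prime := ⟨hp⟩
  have hb : 1 < P + 1 := by omega
  obtain ⟨ϱ, hϱ⟩ : ∃ ϱ, (N - 1) / (P + 1) = ϱ := ⟨_, rfl⟩
  obtain ⟨m, hm⟩ : ∃ m, (N - 1) % (P + 1) = m := ⟨_, rfl⟩
  rw [hϱ]
  set v₁ := padicValNat (P + 1) ((N + j * P).choose (j * P)) with hv₁
  set v₂ := padicValNat (P + 1) ((ϱ + j).choose j) with hv₂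
  have hmP : m < P + 1 := by rw [← hm]; exact Nat.mod_lt _ (by omega)
  obtain ⟨X, hX⟩ : ∃ X, X = (P + 1) * ϱ := ⟨_, rfl⟩
  have hM : X + m = N - 1 := by rw [hX, ← hϱ, ← hm]; exact Nat.div_add_mod _ _
  have hNe : N = X + m + 1 := by omega
  -- Kummer's theorem, twice
  have e1 : P * v₁ = dsum (P + 1) (j * P) + dsum (P + 1) N - dsum (P + 1) (N + j * P) := by
    have := sub_one_mul_padicValNat_choose_eq_sub_sum_digits' (p := P + 1) (k := j * P) (n := N)
    simpa [dsum] using this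
  have e2 : P * v₂ = dsum (P + 1) j + dsum (P + 1) ϱ - dsum (P + 1) (ϱ + j) := by
    have := sub_one_mul_padicValNat_choose_eq_sub_sum_digits' (p := P + 1) (k := j) (n := ϱ)
    simpa [dsum] using this
  -- basic digit facts
  have FA : dsum (P + 1) N ≤ dsum (P + 1) ϱ + m + 1 := by
    have hNe2 : N = ((P + 1) * ϱ + m) + 1 := by rw [← hX]; omega
    calc dsum (P + 1) N = dsum (P + 1) (((P + 1) * ϱ + m) + 1) := by rw [← hNe2]
      _ ≤ dsum (P + 1) ((P + 1) * ϱ + m) + 1 := dsum_succ_le hb _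
      _ = dsum (P + 1) ϱ + m + 1 := by rw [dsum_mul_add hb ϱ m hmP]
  have FC : dsum (P + 1) (j * P) ≤ dsum (P + 1) j * P := dsum_mul_le hb P j
  have hSj1 : 1 ≤ dsum (P + 1) j := dsum_pos hb j hj
  have hSjle : dsum (P + 1) j ≤ j := Nat.digit_sum_le _ _
  -- the main combinatorial inequality
  have key : dsum (P + 1) (j * P) + dsum (P + 1) N + dsum (P + 1) (ϱ + j)
      < P * (j * P) + dsum (P + 1) j + dsum (P + 1) ϱ + dsum (P + 1) (N + j * P) := by
    have rPk : P * (j * P) = j * P * P := by ring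
    have a1 : dsum (P + 1) j * P ≤ j * P := Nat.mul_le_mul_right P hSjle
    have a2 : j * P * 4 ≤ j * P * P := Nat.mul_le_mul_left _ hP
    have a3 : j * 1 ≤ j * P := Nat.mul_le_mul_left _ (by omega)
    have a4 : 1 * P ≤ j * P := Nat.mul_le_mul_right _ hj
    have a5 : j * 4 ≤ j * P := Nat.mul_le_mul_left _ hP
    rcases le_or_gt j (m + 1) with hc | hc
    · obtain ⟨t, ht⟩ : ∃ t, m + 1 = j + t := ⟨m + 1 - j, by omega⟩
      have hNk : N + j * P = (P + 1) * (ϱ + j) + t := by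
        have r1 : (P + 1) * (ϱ + j) = (P + 1) * ϱ + (j * P + j) := by ring
        rw [r1, ← hX]
        omega
      have htP : t < P + 1 := by omega
      have hSNk : dsum (P + 1) (N + j * P) = dsum (P + 1) (ϱ + j) + t := by
        rw [hNk]; exact dsum_mul_add hb _ t htP
      linarith [FA, FC]
    · obtain ⟨d1, hd1⟩ : ∃ d1, j = m + 2 + d1 := ⟨j - (m + 2), by omega⟩
      obtain ⟨e, he⟩ : ∃ e, d1 / (P + 1) = e := ⟨_, rfl⟩
      obtain ⟨f, hf⟩ : ∃ f, d1 % (P + 1) = f := ⟨_, rfl⟩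
      have hfP : f < P + 1 := by rw [← hf]; exact Nat.mod_lt _ (by omega)
      obtain ⟨Y, hY⟩ : ∃ Y, Y = (P + 1) * e := ⟨_, rfl⟩
      have hd1eq : Y + f = d1 := by rw [hY, ← he, ← hf]; exact Nat.div_add_mod _ _
      obtain ⟨f', hf'⟩ : ∃ f', f + f' = P := ⟨P - f, by omega⟩
      have heY : e ≤ Y := by rw [hY]; exact Nat.le_mul_of_pos_left _ (by omega)
      have heJ : e + 1 ≤ ϱ + j := by omega
      obtain ⟨g, hg⟩ : ∃ g, ϱ + j = e + 1 + g := ⟨ϱ + j - (e + 1), by omega⟩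
      have hNk : N + j * P = (P + 1) * g + f' := by
        have r1 : (P + 1) * (ϱ + j) = (P + 1) * ϱ + (j * P + j) := by ring
        have r2 : (P + 1) * (e + 1 + g) = (P + 1) * e + (P + 1) * g + (P + 1) := by ring
        have r3 : (P + 1) * (ϱ + j) = (P + 1) * (e + 1 + g) := by rw [hg]
        rw [← hX] at r1
        rw [← hY] at r2
        omega
      have hSNk : dsum (P + 1) (N + j * P) = dsum (P + 1) g + f' := by
        rw [hNk]; exact dsum_mul_add hb _ f' (by omega)
      have hSgj : dsum (P + 1) (ϱ + j) ≤ dsum (P + 1) g + (e + 1) := by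
        have hcomm : ϱ + j = g + (e + 1) := by omega
        rw [hcomm]
        exact dsum_add_le hb g (e + 1)
      have he2 : e + 2 ≤ j := by omega
      linarith [FA, FC]
  -- put it together
  have h2 : dsum (P + 1) j + dsum (P + 1) ϱ ≤ P * v₂ + dsum (P + 1) (ϱ + j) := by omega
  have hpos : 0 < P * (j * P) + P * v₂ :=
    Nat.add_pos_left (Nat.mul_pos (by omega) (Nat.mul_pos hj (by omega))) _
  have h1' : P * v₁ < P * (j * P) + P * v₂ := by omega
  have hfin : P * v₁ < P * (j * P + v₂) := by rw [Nat.mul_add]; exact h1'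
  exact Nat.lt_of_mul_lt_mul_left hfin

/-- Lemma 10 of the paper. Let `p > 3` be a prime, `r ≥ 1`,
`ϱ = ⌊(r+1)/(p+1)⌋`, let `α` be an integer with `ϱ < α` and `α(p-1) ≤ r`, and set
`ϱ' = ⌈(r-α)/p⌉ - 1`.  Then for every integer `j ≥ 1` with `j(p-1) ≤ α` one has
`v_p(binom(r, α)) < j(p-1) + v_p(binom(r, α - j(p-1))) + v_p(binom(ϱ'+j, j))`. -/
theorem lemma10_valuation_ineq (p r α j : ℕ) (hp : p.Prime) (hp3 : 3 < p) (hr : 1 ≤ r)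
    (hϱα : (r + 1) / (p + 1) < α) (hαr : α * (p - 1) ≤ r)
    (hj1 : 1 ≤ j) (hj : j * (p - 1) ≤ α) :
    padicValNat p (r.choose α)
      < j * (p - 1) + padicValNat p (r.choose (α - j * (p - 1)))
        + padicValNat p (((r - α + p - 1) / p - 1 + j).choose j) := by
  haveI : Fact p.Prime := ⟨hp⟩
  obtain ⟨P, rfl⟩ : ∃ P, p = P + 1 := ⟨p - 1, by omega⟩
  have hne4' : P + 1 ≠ 4 := by intro h; rw [h] at hp; norm_num at hp
  have hP : 4 ≤ P := by omega
  have hsub : P + 1 - 1 = P := by omega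
  rw [hsub] at hαr hj ⊢
  obtain ⟨k, hk⟩ : ∃ k, k = j * P := ⟨_, rfl⟩
  rw [← hk] at hj ⊢
  have hα1 : 1 ≤ α := lt_of_le_of_lt (Nat.zero_le _) hϱα
  have hα4 : α * 4 ≤ α * P := Nat.mul_le_mul_left _ hP
  have hαP : α * P ≤ r := hαr
  have hαltr : α < r := by omega
  have hk1 : 1 ≤ k := by
    rw [hk]; exact Nat.mul_pos hj1 (by omega)
  set N := r - α with hN
  have hN1 : 1 ≤ N := by omega
  set β := α - k with hβ
  -- rewrite the ϱ' expression
  have hϱeq : (r - α + (P + 1) - 1) / (P + 1) - 1 = (N - 1) / (P + 1) := by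
    have h1 : r - α + (P + 1) - 1 = (N - 1) + (P + 1) := by omega
    rw [h1, Nat.add_div_right _ (by omega : 0 < P + 1)]
    exact Nat.succ_sub_one _
  rw [hϱeq]
  -- the product identity for binomial coefficients
  have hβα : β ≤ α := Nat.sub_le _ _
  have hαβk : α - β = k := by omega
  have hrβ : r - β = N + k := by omega
  have hid : r.choose α * α.choose β = r.choose β * ((N + k).choose k) := by
    have := Nat.choose_mul (n := r) (k := α) (s := β) hβα
    rw [hαβk, hrβ] at this
    exact this
  have hne1 : r.choose α ≠ 0 := Nat.choose_pos (le_of_lt hαltr) |>.ne'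
  have hne2 : α.choose β ≠ 0 := (Nat.choose_pos hβα).ne'
  have hne3 : r.choose β ≠ 0 := (Nat.choose_pos (by omega)).ne'
  have hne4 : (N + k).choose k ≠ 0 := (Nat.choose_pos (Nat.le_add_left _ _)).ne'
  have hval : padicValNat (P + 1) (r.choose α) + padicValNat (P + 1) (α.choose β)
      = padicValNat (P + 1) (r.choose β) + padicValNat (P + 1) ((N + k).choose k) := by
    rw [← padicValNat.mul hne1 hne2, ← padicValNat.mul hne3 hne4, hid]
  have hstep := step2 P N j hP (by exact hp) hN1 hj1
  rw [← hk] at hstep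
  omega
end

section
/- Let p > 3 be a prime, let r ≥ 1 be an integer, set ϱ = ⌊(r+1)/(p+1)⌋, let α be an integer with ϱ < α and α(p−1) ≤ r, and set ϱ' = ⌈(r−α)/p⌉ − 1. Then for every integer i with ϱ' < i and i(p−1)+α ≤ r one has v_p(binom(r, α)) < (i(p−1)+2α−r) + v_p(binom(r, i(p−1)+α)) + v_p(binom(i−1, ϱ')). (In particular, under these hypotheses the integer i(p−1)+2α−r is positive.) -/
open Nat Finset

private lemma three_pow_ge : ∀ e : ℕ, 1 ≤ e → e + 2 ≤ 3 ^ e := by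
  intro e he
  induction e with
  | zero => omega
  | succ n ih =>
    rcases Nat.eq_zero_or_pos n with rfl | hn
    · norm_num
    · have h1 := ih hn
      have h : 3 ^ (n + 1) = 3 * 3 ^ n := by ring
      omega

private lemma log_add_two_le {p X D : ℕ} (hp3 : 3 ≤ p) (hD2 : 2 ≤ D) (hXD : X ≤ D) :
    Nat.log p X + 2 ≤ D := by
  rcases Nat.eq_zero_or_pos (Nat.log p X) with h0 | h1
  · omega
  · have hX0 : X ≠ 0 := by
      intro h
      rw [h] at h1
      simp at h1
    have h2 : p ^ Nat.log p X ≤ X := Nat.pow_log_le_self p hX0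
    have h3 : 3 ^ Nat.log p X ≤ p ^ Nat.log p X := Nat.pow_le_pow_left hp3 _
    have h4 := three_pow_ge (Nat.log p X) h1
    omega

private lemma mod_eq_of_dvd_add {P x u : ℕ} (h : P ∣ x + u) (hu1 : 1 ≤ u) (huP : u < P) :
    x % P = P - u := by
  obtain ⟨c, hc⟩ := h
  rcases Nat.eq_zero_or_pos c with rfl | hc1
  · simp only [Nat.mul_zero] at hc; omega
  · have h3 : P * (c - 1) + P = P * c := by
      conv_rhs => rw [show c = (c - 1) + 1 from by omega]
      rw [Nat.mul_add, Nat.mul_one]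
    have h2 : x = (P - u) + P * (c - 1) := by omega
    rw [h2, Nat.add_mul_mod_self_left, Nat.mod_eq_of_lt (by omega)]

/-- The key counting lemma: with `n = i*p - q` and `m = i - q`, the number of carries
when adding `D` to `n` in base `p` is less than `D` plus the carries when adding `D` to `m`
plus the carries in `⌊q/p⌋ + (i-1-⌊q/p⌋)`. -/
private lemma main_count (p : ℕ) (hp : p.Prime) (hp3 : 3 ≤ p) (i q D : ℕ)
    (hqi : q ≤ i) (hqD : q * (p - 1) + 2 ≤ D * p) :
    padicValNat p ((i * p - q + D).choose D) + 1 ≤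
      D + padicValNat p ((i - q + D).choose D) + padicValNat p ((i - 1).choose (q / p)) := by
  haveI : Fact p.Prime := ⟨hp⟩
  have hp1 : 1 < p := by omega
  have hppos : 0 < p := by omega
  have hD1 : 1 ≤ D := by
    rcases Nat.eq_zero_or_pos D with rfl | h
    · simp only [Nat.zero_mul] at hqD; omega
    · exact h
  rcases Nat.lt_or_ge D 2 with hDlt2 | hD2
  · -- D = 1, hence q = 0
    have hDe : D = 1 := by omega
    subst hDe
    have hq0 : q = 0 := by
      by_contra h
      have h1 : 1 ≤ q := by omega
      have h2 : p - 1 ≤ q * (p - 1) := Nat.le_mul_of_pos_left _ h1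
      have h3 : 1 * p = p := one_mul p
      omega
    subst hq0
    simp only [Nat.sub_zero, Nat.zero_div]
    rw [Nat.choose_one_right]
    have hv : padicValNat p (i * p + 1) = 0 := by
      apply padicValNat.eq_zero_of_not_dvd
      intro hdvd
      have h2 : p ∣ i * p := ⟨i, mul_comm i p⟩
      have h3 : p ∣ 1 := by
        have := Nat.dvd_sub hdvd h2
        simpa using this
      exact absurd (Nat.le_of_dvd one_pos h3) (by omega)
    rw [hv]
    omega
  -- now D ≥ 2
  set n := i * p - q with hn_def
  set m := i - q with hm_def
  have hqip : q ≤ i * p := le_trans hqi (Nat.le_mul_of_pos_right i hppos)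
  have hni : n + q = i * p := by omega
  have hbL : Nat.log p (n + D) < n + D + 1 :=
    lt_of_le_of_lt (Nat.log_le_self _ _) (by omega)
  have hL := padicValNat_choose' (p := p) (n := n) (k := D) (b := n + D + 1) hbL
  set A := (Ico 1 (n + D + 1)).filter (fun e => p ^ e ≤ D % p ^ e + n % p ^ e) with hA_def
  have hbM : Nat.log p (m + D) < m + D + 1 :=
    lt_of_le_of_lt (Nat.log_le_self _ _) (by omega)
  have hM := padicValNat_choose' (p := p) (n := m) (k := D) (b := m + D + 1) hbM
  set B := (Ico 1 (m + D + 1)).filter (fun e => p ^ e ≤ D % p ^ e + m % p ^ e) with hB_def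
  rw [hL, hM]
  rcases Finset.eq_empty_or_nonempty A with hAe | hAne
  · rw [hAe]
    simp only [Finset.card_empty]
    omega
  set e1 := A.max' hAne with he1_def
  have he1A : e1 ∈ A := A.max'_mem hAne
  have he1mem := Finset.mem_filter.mp he1A
  have he1Ico := Finset.mem_Ico.mp he1mem.1
  have he1carry : p ^ e1 ≤ D % p ^ e1 + n % p ^ e1 := he1mem.2
  have he1pos : 1 ≤ e1 := he1Ico.1
  have hcardA : A.card ≤ e1 := by
    have hsub : A ⊆ Finset.Icc 1 e1 := by
      intro e he
      have h1 := (Finset.mem_Ico.mp (Finset.mem_filter.mp he).1).1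
      exact Finset.mem_Icc.mpr ⟨h1, A.le_max' e he⟩
    calc A.card ≤ (Finset.Icc 1 e1).card := Finset.card_le_card hsub
      _ = e1 := by rw [Nat.card_Icc]; omega
  rcases le_or_gt (p ^ e1) (D * p) with hcase | hcase
  · -- p^e1 small: e1 ≤ D - 1
    have he1D : e1 ≤ D - 1 := by
      rcases Nat.lt_or_ge e1 2 with h2 | h2
      · omega
      · have hsplit : p ^ (e1 - 1) * p = p ^ e1 := by
          rw [← Nat.pow_succ]; congr 1; omega
        have h3 : p ^ (e1 - 1) ≤ D :=
          Nat.le_of_mul_le_mul_right (by rw [hsplit]; omega) hppos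
        have h4 : 3 ^ (e1 - 1) ≤ p ^ (e1 - 1) := Nat.pow_le_pow_left hp3 _
        have h5 := three_pow_ge (e1 - 1) (by omega)
        omega
    omega
  · -- p^e1 > D*p
    have hDlt : D < p ^ e1 := lt_of_le_of_lt (Nat.le_mul_of_pos_right D hppos) hcase
    have hDmod : D % p ^ e1 = D := Nat.mod_eq_of_lt hDlt
    have hnmod : n % p ^ e1 < p ^ e1 := Nat.mod_lt _ (pow_pos hppos e1)
    set d := p ^ e1 - n % p ^ e1 with hd_def
    have hd1 : 1 ≤ d := by omega
    have hdD : d ≤ D := by rw [hDmod] at he1carry; omega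
    have hdvdA : p ^ e1 ∣ n + d := by
      have hdm := Nat.div_add_mod n (p ^ e1)
      refine ⟨n / p ^ e1 + 1, ?_⟩
      have hexp : p ^ e1 * (n / p ^ e1 + 1) = p ^ e1 * (n / p ^ e1) + p ^ e1 := by ring
      omega
    have hpe1 : p ^ e1 = p ^ (e1 - 1) * p := by
      rw [← Nat.pow_succ]; congr 1; omega
    have hpdvd : p ∣ n + d := by
      obtain ⟨c, hc⟩ := hdvdA
      exact ⟨p ^ (e1 - 1) * c, by rw [hc, hpe1]; ring⟩
    have hpdvd2 : p ∣ n + q := ⟨i, by rw [hni, Nat.mul_comm]⟩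
    by_cases hqd : q ≤ d
    · -- use the second binomial (carries of m + D)
      have hpdq : p ∣ d - q := by
        have h0 := Nat.dvd_sub hpdvd hpdvd2
        have heq : (n + d) - (n + q) = d - q := by omega
        rwa [heq] at h0
      set t := q + (d - q) / p with ht_def
      have hpt : p * ((d - q) / p) = d - q := Nat.mul_div_cancel' hpdq
      have htD : t ≤ D := by
        have := Nat.div_le_self (d - q) p
        omega
      have ht1 : 1 ≤ t := by
        rcases Nat.eq_zero_or_pos q with hq0 | hq1
        · have hd' : d - q = d := by omega
          have hdp : p ≤ d := by
            refine Nat.le_of_dvd (by omega) ?_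
            rwa [hd'] at hpdq
          have hone : 1 ≤ (d - q) / p := by
            rw [hd']
            exact (Nat.le_div_iff_mul_le hppos).mpr (by omega)
          calc (1:ℕ) ≤ (d - q) / p := hone
            _ ≤ q + (d - q) / p := Nat.le_add_left _ _
            _ = t := ht_def.symm
        · calc (1:ℕ) ≤ q := hq1
            _ ≤ q + (d - q) / p := Nat.le_add_right _ _
            _ = t := ht_def.symm
      have hdvdB : p ^ (e1 - 1) ∣ m + t := by
        obtain ⟨c, hc⟩ := hdvdA
        refine ⟨c, ?_⟩
        have h2 : p * m + p * q = p * i := by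
          rw [← Nat.mul_add]; congr 1; omega
        have h3 : p * t = p * q + (d - q) := by
          rw [ht_def, Nat.mul_add, hpt]
        have h4 : p * (m + t) = p * m + p * t := by ring
        have h5 : p * i = i * p := Nat.mul_comm p i
        have h1 : p * (m + t) = n + d := by omega
        have h6 : p ^ e1 * c = p * (p ^ (e1 - 1) * c) := by rw [hpe1]; ring
        have h7 := h1.trans hc
        rw [h6] at h7
        exact Nat.eq_of_mul_eq_mul_left hppos h7
      have hmt1 : 1 ≤ m + t := by omega
      have hsubB : Finset.Ico (Nat.log p D + 1) e1 ⊆ B := by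
        intro e he
        obtain ⟨heE, hee1⟩ := Finset.mem_Ico.mp he
        have hee : e ≤ e1 - 1 := by omega
        have hdvde : p ^ e ∣ m + t := dvd_trans (pow_dvd_pow p hee) hdvdB
        have hDe : D < p ^ e := by
          calc D < p ^ (Nat.log p D + 1) := Nat.lt_pow_succ_log_self hp1 D
            _ ≤ p ^ e := Nat.pow_le_pow_right (by omega) heE
        have hmmod : m % p ^ e = p ^ e - t :=
          mod_eq_of_dvd_add hdvde ht1 (by omega)
        rw [hB_def]
        refine Finset.mem_filter.mpr ⟨Finset.mem_Ico.mpr ⟨by omega, ?_⟩, ?_⟩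
        · have hb1 : p ^ e ≤ m + t := Nat.le_of_dvd hmt1 hdvde
          have hb2 : e < p ^ e := Nat.lt_pow_self hp1
          omega
        · rw [Nat.mod_eq_of_lt hDe, hmmod]
          omega
      have hcardB : e1 - (Nat.log p D + 1) ≤ B.card := by
        calc e1 - (Nat.log p D + 1) = (Finset.Ico (Nat.log p D + 1) e1).card :=
              (Nat.card_Ico _ _).symm
          _ ≤ B.card := Finset.card_le_card hsubB
      have hlog : Nat.log p D + 2 ≤ D := log_add_two_le hp3 hD2 le_rfl
      omega
    · -- d < q : use the third binomial
      push_neg at hqd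
      have hpdq : p ∣ q - d := by
        have h0 := Nat.dvd_sub hpdvd2 hpdvd
        have heq : (n + q) - (n + d) = q - d := by omega
        rwa [heq] at h0
      set w := (q - d) / p with hw_def
      have hpw : p * w = q - d := Nat.mul_div_cancel' hpdq
      have hw1 : 1 ≤ w := by
        have hpq : p ≤ q - d := Nat.le_of_dvd (by omega) hpdq
        rw [hw_def]
        exact (Nat.le_div_iff_mul_le hppos).mpr (by omega)
      set Q := q / p with hQ_def
      have hwQ : w ≤ Q := Nat.div_le_div_right (by omega)
      have hQq : Q < q := Nat.div_lt_self (by omega) hp1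
      have hQi : Q < i := lt_of_lt_of_le hQq hqi
      have hi1 : 1 ≤ i := by omega
      have hdvdC : p ^ (e1 - 1) ∣ i - w := by
        obtain ⟨c, hc⟩ := hdvdA
        refine ⟨c, ?_⟩
        have h2 : p * (i - w) + p * w = p * i := by
          rw [← Nat.mul_add]; congr 1; omega
        have h5 : p * i = i * p := Nat.mul_comm p i
        have h1 : p * (i - w) = n + d := by omega
        have h6 : p ^ e1 * c = p * (p ^ (e1 - 1) * c) := by rw [hpe1]; ring
        have h7 := h1.trans hc
        rw [h6] at h7
        exact Nat.eq_of_mul_eq_mul_left hppos h7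
      have hiw1 : 1 ≤ i - w := by omega
      have hQle : Q ≤ i - 1 := by omega
      have hbC : Nat.log p (i - 1) < i := lt_of_le_of_lt (Nat.log_le_self _ _) (by omega)
      have hT := padicValNat_choose (p := p) (n := i - 1) (k := Q) (b := i) hQle hbC
      set Cs := (Ico 1 i).filter (fun e => p ^ e ≤ Q % p ^ e + ((i - 1) - Q) % p ^ e)
        with hC_def
      rw [hT]
      have hsubC : Finset.Ico (Nat.log p Q + 1) e1 ⊆ Cs := by
        intro e he
        obtain ⟨heE, hee1⟩ := Finset.mem_Ico.mp he
        have hee : e ≤ e1 - 1 := by omega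
        have hdvde : p ^ e ∣ i - w := dvd_trans (pow_dvd_pow p hee) hdvdC
        have hQe : Q < p ^ e := by
          calc Q < p ^ (Nat.log p Q + 1) := Nat.lt_pow_succ_log_self hp1 Q
            _ ≤ p ^ e := Nat.pow_le_pow_right (by omega) heE
        have hxu : ((i - 1) - Q) + (Q + 1 - w) = i - w := by omega
        have hdvd' : p ^ e ∣ ((i - 1) - Q) + (Q + 1 - w) := by rw [hxu]; exact hdvde
        have hmod : ((i - 1) - Q) % p ^ e = p ^ e - (Q + 1 - w) :=
          mod_eq_of_dvd_add hdvd' (by omega) (by omega)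
        rw [hC_def]
        refine Finset.mem_filter.mpr ⟨Finset.mem_Ico.mpr ⟨by omega, ?_⟩, ?_⟩
        · have hb1 : p ^ e ≤ i - w := Nat.le_of_dvd (by omega) hdvde
          have hb2 : e < p ^ e := Nat.lt_pow_self hp1
          omega
        · rw [Nat.mod_eq_of_lt hQe, hmod]
          omega
      have hcardC : e1 - (Nat.log p Q + 1) ≤ Cs.card := by
        calc e1 - (Nat.log p Q + 1) = (Finset.Ico (Nat.log p Q + 1) e1).card :=
              (Nat.card_Ico _ _).symm
          _ ≤ Cs.card := Finset.card_le_card hsubC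
      have hQD : Q ≤ D := by
        have h1 : Q * p ≤ q := Nat.div_mul_le_self q p
        have h2 : Q * p * (p - 1) ≤ q * (p - 1) := Nat.mul_le_mul_right _ h1
        have h3 : Q * (p - 1) * p < D * p := by
          have h4 : Q * (p - 1) * p = Q * p * (p - 1) := by ring
          omega
        have h4 : Q * (p - 1) < D := lt_of_mul_lt_mul_right h3 (Nat.zero_le p)
        have h5 : Q ≤ Q * (p - 1) := Nat.le_mul_of_pos_right _ (by omega)
        omega
      have hlog : Nat.log p Q + 2 ≤ D := log_add_two_le hp3 hD2 hQD
      omega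

/-- Lemma 11 of the paper. Let `p > 3` be a prime, `r ≥ 1`,
`ϱ = ⌊(r+1)/(p+1)⌋`, let `α` be an integer with `ϱ < α` and `α(p-1) ≤ r`, and set
`ϱ' = ⌈(r-α)/p⌉ - 1`.  Then for every integer `i` with `ϱ' < i` and `i(p-1)+α ≤ r`,
the integer `i(p-1)+2α-r` is positive and
`v_p(binom(r, α)) < (i(p-1)+2α-r) + v_p(binom(r, i(p-1)+α)) + v_p(binom(i-1, ϱ'))`. -/
theorem lemma11_valuation_ineq (p r α i : ℕ) (hp : p.Prime) (hp3 : 3 < p) (hr : 1 ≤ r)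
    (hϱα : (r + 1) / (p + 1) < α) (hαr : α * (p - 1) ≤ r)
    (hi : (r - α + p - 1) / p - 1 < i) (hir : i * (p - 1) + α ≤ r) :
    0 < (i : ℤ) * ((p : ℤ) - 1) + 2 * (α : ℤ) - (r : ℤ) ∧
    (padicValNat p (r.choose α) : ℤ)
      < ((i : ℤ) * ((p : ℤ) - 1) + 2 * (α : ℤ) - (r : ℤ))
        + (padicValNat p (r.choose (i * (p - 1) + α)) : ℤ)
        + (padicValNat p ((i - 1).choose ((r - α + p - 1) / p - 1)) : ℤ) := by
  haveI : Fact p.Prime := ⟨hp⟩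
  have hppos : 0 < p := by omega
  have hα1 : 0 < α := lt_of_le_of_lt (Nat.zero_le _) hϱα
  have hαp1 : r + 2 ≤ α * (p + 1) := by
    have h := (Nat.div_lt_iff_lt_mul (show 0 < p + 1 by omega)).mp hϱα
    omega
  have h3α : α * 3 ≤ α * (p - 1) := Nat.mul_le_mul_left α (by omega)
  have hαle : α + 2 ≤ r := by omega
  set n := r - α with hn_def
  have hn2 : 2 ≤ n := by omega
  have hnα : n + α = r := by omega
  have hdiv1 : 1 ≤ (n + p - 1) / p := by
    rw [Nat.le_div_iff_mul_le hppos]; omega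
  have hile : (n + p - 1) / p ≤ i := by omega
  have hnip : n ≤ i * p := by
    have h1 : (n + p - 1) / p < i + 1 := by omega
    have h2 := (Nat.div_lt_iff_lt_mul hppos).mp h1
    have h3 : (i + 1) * p = i * p + p := by ring
    omega
  have hip_split : i * (p - 1) + i = i * p := by
    have h : p - 1 + 1 = p := by omega
    calc i * (p - 1) + i = i * ((p - 1) + 1) := by ring
      _ = i * p := by rw [h]
  have hin : i * (p - 1) ≤ n := by omega
  have hDpos : r + 1 ≤ i * (p - 1) + 2 * α := by
    by_contra hcon
    push_neg at hcon
    have hαi : α ≤ i := by omega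
    have hmul : α * (p - 1) ≤ i * (p - 1) := Nat.mul_le_mul_right _ hαi
    have hsplit2 : α * (p - 1) + 2 * α = α * (p + 1) := by
      have h : (p - 1) + 2 = p + 1 := by omega
      calc α * (p - 1) + 2 * α = α * ((p - 1) + 2) := by ring
        _ = α * (p + 1) := by rw [h]
    omega
  set D := i * (p - 1) + 2 * α - r with hD_def
  have hDr : D + r = i * (p - 1) + 2 * α := by omega
  have hD1 : 1 ≤ D := by omega
  set q := i * p - n with hq_def
  have hqn : q + n = i * p := by omega
  have hqi : q ≤ i := by omega
  have hαpn : n + 2 ≤ α * p := by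
    have h : α * (p + 1) = α * p + α := by ring
    omega
  have hDr' : D + r + i = i * p + 2 * α := by omega
  have hqD : q * (p - 1) + 2 ≤ D * p := by
    have hqsplit : q * (p - 1) + q = q * p := by
      have h : p - 1 + 1 = p := by omega
      calc q * (p - 1) + q = q * ((p - 1) + 1) := by ring
        _ = q * p := by rw [h]
    have hA : (q : ℤ) + n = i * p := by exact_mod_cast hqn
    have hB : (D : ℤ) + r + i = i * p + 2 * α := by exact_mod_cast hDr'
    have hC : (n : ℤ) + α = r := by exact_mod_cast hnα
    have hE : (n : ℤ) + 2 ≤ α * p := by exact_mod_cast hαpn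
    have hAp : (q : ℤ) * p + n * p = i * p * p := by linear_combination p * hA
    have hBp : (D : ℤ) * p + r * p + i * p = i * p * p + 2 * α * p := by
      linear_combination p * hB
    have hCp : (n : ℤ) * p + α * p = r * p := by linear_combination p * hC
    have hQs : (q : ℤ) * p + 2 ≤ D * p + q := by linarith
    have hQs' : q * p + 2 ≤ D * p + q := by exact_mod_cast hQs
    omega
  have hmain := main_count p hp (by omega) i q D hqi hqD
  have harg1 : i * p - q + D = i * (p - 1) + α := by omega
  have harg2 : i - q + D = α := by omega
  rw [harg1, harg2] at hmain
  -- identify the third binomial coefficient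
  have hceil : (n + p - 1) / p = i - q / p := by
    have hdm := Nat.div_add_mod q p
    have hR : q % p < p := Nat.mod_lt q hppos
    have hQle : q / p ≤ i := le_trans (Nat.div_le_self q p) hqi
    have h1 : p * (i - q / p) + p * (q / p) = p * i := by
      rw [← Nat.mul_add]; congr 1; omega
    have h3 : p * i = i * p := Nat.mul_comm p i
    have h2 : n + p - 1 = p * (i - q / p) + (p - 1 - q % p) := by omega
    rw [h2, Nat.mul_add_div hppos,
      Nat.div_eq_of_lt (show p - 1 - q % p < p by omega)]
    omega
  have hi1 : 1 ≤ i := by omega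
  have hQlt : q / p ≤ i - 1 := by
    rcases Nat.eq_zero_or_pos q with h0 | h1
    · have : q / p = 0 := by rw [h0]; exact Nat.zero_div p
      omega
    · have := Nat.div_lt_self h1 (show 1 < p by omega)
      omega
  have hϱeq : (n + p - 1) / p - 1 = (i - 1) - q / p := by omega
  have hchoose_eq : (i - 1).choose ((n + p - 1) / p - 1) = (i - 1).choose (q / p) := by
    rw [hϱeq, Nat.choose_symm hQlt]
  -- transfer via the product identity
  set k := i * (p - 1) + α with hk_def
  set m := i - q with hm_def
  have hDα : D ≤ α := by omega
  have hkr' : k ≤ r := hir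
  have hDk : D ≤ k := by omega
  have hrn : r - α = n := by omega
  have hrm : r - k = m := by omega
  have hαm : α - D = m := by omega
  have hkn : k - D = n := by omega
  have e1 : r.choose α * (α.factorial * n.factorial) = r.factorial := by
    have h := Nat.choose_mul_factorial_mul_factorial (show α ≤ r by omega)
    rw [hrn] at h
    rw [← h]; ring
  have e2 : α.choose D * (D.factorial * m.factorial) = α.factorial := by
    have h := Nat.choose_mul_factorial_mul_factorial hDα
    rw [hαm] at h
    rw [← h]; ring
  have e3 : r.choose k * (k.factorial * m.factorial) = r.factorial := by
    have h := Nat.choose_mul_factorial_mul_factorial hkr'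
    rw [hrm] at h
    rw [← h]; ring
  have e4 : k.choose D * (D.factorial * n.factorial) = k.factorial := by
    have h := Nat.choose_mul_factorial_mul_factorial hDk
    rw [hkn] at h
    rw [← h]; ring
  have hprod : r.choose α * α.choose D = r.choose k * k.choose D := by
    have hpos : 0 < D.factorial * m.factorial * n.factorial := by positivity
    apply Nat.eq_of_mul_eq_mul_right hpos
    calc r.choose α * α.choose D * (D.factorial * m.factorial * n.factorial)
        = r.choose α * (α.choose D * (D.factorial * m.factorial)) * n.factorial := by ring
      _ = r.choose α * α.factorial * n.factorial := by rw [e2]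
      _ = r.choose α * (α.factorial * n.factorial) := by ring
      _ = r.factorial := e1
      _ = r.choose k * (k.factorial * m.factorial) := e3.symm
      _ = r.choose k * ((k.choose D * (D.factorial * n.factorial)) * m.factorial) := by
          rw [e4]
      _ = r.choose k * k.choose D * (D.factorial * m.factorial * n.factorial) := by ring
  have hne1 : r.choose α ≠ 0 := (Nat.choose_pos (show α ≤ r by omega)).ne'
  have hne2 : α.choose D ≠ 0 := (Nat.choose_pos hDα).ne'
  have hne3 : r.choose k ≠ 0 := (Nat.choose_pos hkr').ne'
  have hne4 : k.choose D ≠ 0 := (Nat.choose_pos hDk).ne'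
  have hval : padicValNat p (r.choose α) + padicValNat p (α.choose D)
      = padicValNat p (r.choose k) + padicValNat p (k.choose D) := by
    rw [← padicValNat.mul hne1 hne2, ← padicValNat.mul hne3 hne4, hprod]
  have hfin : padicValNat p (r.choose α) + 1 ≤
      D + padicValNat p (r.choose k) + padicValNat p ((i - 1).choose (q / p)) := by
    omega
  have hcast : (i : ℤ) * ((p : ℤ) - 1) + 2 * (α : ℤ) - (r : ℤ) = (D : ℤ) := by
    have h1 : ((i * (p - 1) : ℕ) : ℤ) = (i : ℤ) * ((p : ℤ) - 1) := by
      push_cast [Nat.cast_sub (show 1 ≤ p by omega)]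
      ring
    have h2 : (D : ℤ) + r = ((i * (p - 1) : ℕ) : ℤ) + 2 * α := by exact_mod_cast hDr
    linarith
  refine ⟨?_, ?_⟩
  · rw [hcast]
    exact_mod_cast hD1
  · rw [hchoose_eq, hcast]
    have hz : (padicValNat p (r.choose α) : ℤ) + 1 ≤
        (D : ℤ) + padicValNat p (r.choose k) + padicValNat p ((i - 1).choose (q / p)) := by
      exact_mod_cast hfin
    linarith
end

section
/- Let p > 3 be a prime, let ϱ ≥ 1 be an integer, and set r = ϱ(p+1)+1. Then for every integer j ≥ 1 with j(p−1) ≤ ϱ one has v_p(binom(r, ϱ)) < j(p−1) + v_p(binom(r, ϱ−j(p−1))) + v_p(binom(ϱ+j, j)). -/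
open Nat Finset

/-- helper: `5^L ≥ L+2` for `L ≥ 1`. -/
lemma five_pow_ge (L : ℕ) (h : 1 ≤ L) : L + 2 ≤ 5 ^ L := by
  induction L with
  | zero => omega
  | succ n ih =>
    rcases Nat.eq_zero_or_pos n with h0 | h0
    · subst h0; norm_num
    · have := ih h0
      have : 5 ^ n + 1 ≤ 5 ^ (n+1) := by
        have : 5 ^ n ≥ 1 := Nat.one_le_pow _ _ (by norm_num)
        calc 5 ^ n + 1 ≤ 5 ^ n * 5 := by omega
        _ = 5 ^ (n+1) := by rw [pow_succ]
      omega

/-- Core contradiction: two "bad large" indices `i < i'` are impossible. -/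
lemma core_contra (p ϱ j k i i' : ℕ) (hp5 : 5 ≤ p)
    (hk : k = j * (p - 1)) (hj1 : 1 ≤ j) (hkϱ : k ≤ ϱ)
    (hii' : i < i') (hi1 : 1 ≤ i)
    (hki : k < p ^ i)
    (hA' : p ^ i' ≤ ϱ % p ^ i' + (ϱ * p + 1) % p ^ i')
    (hB' : ¬ p ^ i' ≤ (ϱ - k) % p ^ i' + (ϱ * p + 1 + k) % p ^ i')
    (hC : ¬ p ^ i ≤ j % p ^ i + ϱ % p ^ i) : False := by
  have hppos : 0 < p := by omega
  set q : ℕ := p ^ i with hqdef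
  set q' : ℕ := p ^ i' with hq'def
  set P : ℕ := p ^ (i' - 1) with hPdef
  have hq'P : q' = P * p := by
    rw [hq'def, hPdef, ← pow_succ]
    congr 1
    omega
  have hqpos : 0 < q := Nat.pow_pos hppos
  have hPpos : 0 < P := Nat.pow_pos hppos
  have hq'pos : 0 < q' := Nat.pow_pos hppos
  have hqP : q ∣ P := pow_dvd_pow p (by omega)
  set μ : ℕ := ϱ % P with hμdef
  set m : ℕ := ϱ % q' with hmdef
  have hμP : μ < P := Nat.mod_lt _ hPpos
  have hmq' : m < q' := Nat.mod_lt _ hq'pos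
  -- (ϱ*p) % q' = μ*p
  have f1 : ϱ * p % q' = μ * p := by
    rw [hq'P, Nat.mul_mod_mul_right]
  have hμpq' : μ * p + p ≤ q' := by
    have := Nat.mul_le_mul_right p hμP
    rw [hq'P]
    calc μ * p + p ≤ (μ + 1) * p := by ring_nf; omega
      _ ≤ P * p := Nat.mul_le_mul_right p hμP
  have f2 : (ϱ * p + 1) % q' = μ * p + 1 := by
    rw [Nat.add_mod, f1, Nat.one_mod_eq_one.mpr (by omega), Nat.mod_eq_of_lt (by omega)]
  rw [f2] at hA'
  -- decompose ϱ
  obtain ⟨a, ha⟩ : ∃ a, ϱ = q' * a + m := ⟨ϱ / q', by rw [Nat.div_add_mod ϱ q']⟩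
  -- (ϱ*p+1+k) % q'
  have f3 : (ϱ * p + 1 + k) % q' = (μ * p + 1 + k) % q' := by
    conv_lhs => rw [Nat.add_mod]
    conv_rhs => rw [Nat.add_mod]
    rw [f2, Nat.mod_eq_of_lt (show μ * p + 1 < q' by omega)]
  have hkq' : k < q' := by
    calc k < q := hki
      _ ≤ q' := Nat.pow_le_pow_right hppos (by omega)
  -- m ≥ k
  have hmk : k ≤ m := by
    by_contra hcase
    push_neg at hcase
    have ha1 : 1 ≤ a := by
      rcases Nat.eq_zero_or_pos a with h0 | h0
      · subst h0; simp at ha; omega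
      · exact h0
    obtain ⟨b, hb⟩ : ∃ b, a = b + 1 := ⟨a - 1, by omega⟩
    have hϱ' : ϱ = q' * b + (q' + m) := by
      rw [ha, hb]; ring
    have hsub : ϱ - k = q' * b + (q' + m - k) := by
      rw [hϱ', Nat.add_sub_assoc (by omega)]
    have f4 : (ϱ - k) % q' = q' + m - k := by
      rw [hsub, Nat.mul_add_mod, Nat.mod_eq_of_lt (by omega)]
    rw [f4, f3] at hB'
    -- case on (μ*p+1+k) % q'
    rcases Nat.lt_or_ge (μ * p + 1 + k) q' with hlt | hge
    · rw [Nat.mod_eq_of_lt hlt] at hB'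
      omega
    · have : (μ * p + 1 + k) % q' = μ * p + 1 + k - q' := by
        rw [Nat.mod_eq_sub_mod hge, Nat.mod_eq_of_lt (by omega)]
      rw [this] at hB'
      omega
  -- now m ≥ k; get key inequality q' ≤ μ*p + 1 + k
  have hsub2 : ϱ - k = q' * a + (m - k) := by
    rw [ha, Nat.add_sub_assoc hmk]
  have f5 : (ϱ - k) % q' = m - k := by
    rw [hsub2, Nat.mul_add_mod, Nat.mod_eq_of_lt (by omega)]
  rw [f5, f3] at hB'
  have hkey : q' ≤ μ * p + 1 + k := by
    rcases Nat.lt_or_ge (μ * p + 1 + k) q' with hlt | hge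
    · rw [Nat.mod_eq_of_lt hlt] at hB'
      omega
    · exact hge
  -- s := P - μ
  set s : ℕ := P - μ with hsdef
  have hs1 : 1 ≤ s := by omega
  have hsp : s * p ≤ k + 1 := by
    have : s * p = P * p - μ * p := by rw [hsdef, Nat.sub_mul]
    omega
  have hs5 : 5 * s ≤ s * p := by
    calc 5 * s = s * 5 := by ring
      _ ≤ s * p := Nat.mul_le_mul_left s hp5
  have hsq : s < q := by omega
  -- ϱ % q = q - s
  have hμq : ϱ % q = μ % q := by
    rw [hμdef, Nat.mod_mod_of_dvd ϱ hqP]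
  obtain ⟨c, hc⟩ := hqP
  have hc1 : 1 ≤ c := by
    rcases Nat.eq_zero_or_pos c with h0 | h0
    · subst h0; simp at hc; omega
    · exact h0
  obtain ⟨d, hd⟩ : ∃ d, c = d + 1 := ⟨c - 1, by omega⟩
  have hμval : μ = q * d + (q - s) := by
    have hPq : P = q * d + q := by rw [hc, hd]; ring
    omega
  have f6 : ϱ % q = q - s := by
    rw [hμq, hμval, Nat.mul_add_mod, Nat.mod_eq_of_lt (by omega)]
  have hjk : j ≤ k := by
    rw [hk]
    exact Nat.le_mul_of_pos_right j (by omega)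
  have hjq : j % q = j := Nat.mod_eq_of_lt (by omega)
  rw [hjq, f6] at hC
  have hjs : j < s := by omega
  -- final contradiction
  have h1 : (j + 1) * p ≤ s * p := Nat.mul_le_mul_right p (by omega)
  have h2 : (j + 1) * p = j * p + p := by ring
  have h3 : k + j = j * p := by
    rw [hk, ← Nat.mul_succ]
    congr 1
    omega
  omega

/-- Lemma 13 of the paper. Let `p > 3` be a prime, `ϱ ≥ 1` an
integer, and `r = ϱ(p+1)+1`.  Then for every integer `j ≥ 1` with `j(p-1) ≤ ϱ` one has
`v_p(binom(r, ϱ)) < j(p-1) + v_p(binom(r, ϱ - j(p-1))) + v_p(binom(ϱ+j, j))`. -/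
theorem lemma13_valuation_ineq (p r ϱ j : ℕ) (hp : p.Prime) (hp3 : 3 < p)
    (hϱ : 1 ≤ ϱ) (hrdef : r = ϱ * (p + 1) + 1)
    (hj1 : 1 ≤ j) (hj : j * (p - 1) ≤ ϱ) :
    padicValNat p (r.choose ϱ)
      < j * (p - 1) + padicValNat p (r.choose (ϱ - j * (p - 1)))
        + padicValNat p ((ϱ + j).choose j) := by
  haveI : Fact p.Prime := ⟨hp⟩
  have hp5 : 5 ≤ p := by
    rcases Nat.lt_or_ge p 5 with h | h
    · interval_cases p <;> simp_all <;> norm_num at hp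
    · exact h
  set k : ℕ := j * (p - 1) with hkdef
  have hexp : ϱ * (p + 1) = ϱ * p + ϱ := by ring
  have hjk : j ≤ k := Nat.le_mul_of_pos_right j (by omega)
  have hk4 : 4 ≤ k := by
    calc 4 = 1 * 4 := by norm_num
      _ ≤ j * (p - 1) := Nat.mul_le_mul hj1 (by omega)
  have hrϱ : r - ϱ = ϱ * p + 1 := by
    rw [hrdef, hexp]
    generalize ϱ * p = M
    omega
  have hrϱk : r - (ϱ - k) = ϱ * p + 1 + k := by
    rw [hrdef, hexp]
    generalize ϱ * p = M
    omega
  set b : ℕ := Nat.log p r + 1 with hbdef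
  have hlogr : Nat.log p r < b := by omega
  have hϱjr : ϱ + j ≤ r := by
    have hjϱ : j ≤ ϱ := le_trans hjk hj
    have hm : ϱ ≤ ϱ * p := Nat.le_mul_of_pos_right ϱ (by omega)
    rw [hrdef, hexp]
    revert hm
    generalize ϱ * p = M
    intro hm
    omega
  have hlogc : Nat.log p (ϱ + j) < b :=
    lt_of_le_of_lt (Nat.log_mono_right hϱjr) hlogr
  set I : Finset ℕ := Finset.Ico 1 b with hIdef
  have e1 : padicValNat p (r.choose ϱ) =
      (I.filter fun i => p ^ i ≤ ϱ % p ^ i + (ϱ * p + 1) % p ^ i).card := by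
    rw [padicValNat_choose (by omega) hlogr, hrϱ]
  have e2 : padicValNat p (r.choose (ϱ - k)) =
      (I.filter fun i => p ^ i ≤ (ϱ - k) % p ^ i + (ϱ * p + 1 + k) % p ^ i).card := by
    rw [padicValNat_choose (by omega) hlogr, hrϱk]
  have e3 : padicValNat p ((ϱ + j).choose j) =
      (I.filter fun i => p ^ i ≤ j % p ^ i + ϱ % p ^ i).card := by
    rw [padicValNat_choose' hlogc]
  rw [e1, e2, e3]
  set SA : Finset ℕ := I.filter fun i => p ^ i ≤ ϱ % p ^ i + (ϱ * p + 1) % p ^ i with hSA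
  set SB : Finset ℕ :=
    I.filter fun i => p ^ i ≤ (ϱ - k) % p ^ i + (ϱ * p + 1 + k) % p ^ i with hSB
  set SC : Finset ℕ := I.filter fun i => p ^ i ≤ j % p ^ i + ϱ % p ^ i with hSC
  set T : Finset ℕ := I.filter
      (fun i => (p ^ i ≤ ϱ % p ^ i + (ϱ * p + 1) % p ^ i)
        ∧ ¬ (p ^ i ≤ (ϱ - k) % p ^ i + (ϱ * p + 1 + k) % p ^ i)
        ∧ ¬ (p ^ i ≤ j % p ^ i + ϱ % p ^ i)) with hT
  have hsub : SA ⊆ SB ∪ SC ∪ T := by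
    intro x hx
    simp only [hSA, hSB, hSC, hT, Finset.mem_filter, Finset.mem_union] at *
    tauto
  have hcard : SA.card ≤ SB.card + SC.card + T.card := by
    calc SA.card ≤ (SB ∪ SC ∪ T).card := Finset.card_le_card hsub
      _ ≤ (SB ∪ SC).card + T.card := Finset.card_union_le _ _
      _ ≤ SB.card + SC.card + T.card := by
          have := Finset.card_union_le SB SC
          omega
  -- bound T.card
  set Ts : Finset ℕ := I.filter (fun i => p ^ i ≤ k) with hTs
  set Tb : Finset ℕ := I.filter
      (fun i => k < p ^ i ∧ (p ^ i ≤ ϱ % p ^ i + (ϱ * p + 1) % p ^ i)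
        ∧ ¬ (p ^ i ≤ (ϱ - k) % p ^ i + (ϱ * p + 1 + k) % p ^ i)
        ∧ ¬ (p ^ i ≤ j % p ^ i + ϱ % p ^ i)) with hTb
  have hTsub : T ⊆ Ts ∪ Tb := by
    intro x hx
    simp only [hT, hTs, hTb, Finset.mem_filter, Finset.mem_union] at *
    rcases Nat.lt_or_ge k (p ^ x) with h | h
    · tauto
    · tauto
  have hTbcard : Tb.card ≤ 1 := by
    apply Finset.card_le_one.mpr
    intro x hx y hy
    simp only [hTb, hIdef, Finset.mem_filter, Finset.mem_Ico] at hx hy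
    by_contra hne
    rcases Nat.lt_or_ge x y with hxy | hxy
    · exact core_contra p ϱ j k x y hp5 hkdef hj1 hj hxy (by omega)
        hx.2.1 hy.2.2.1 hy.2.2.2.1 hx.2.2.2.2
    · have hyx : y < x := by omega
      exact core_contra p ϱ j k y x hp5 hkdef hj1 hj hyx (by omega)
        hy.2.1 hx.2.2.1 hx.2.2.2.1 hy.2.2.2.2
  have hTscard : Ts.card ≤ Nat.log p k := by
    have hsub2 : Ts ⊆ Finset.Ico 1 (Nat.log p k + 1) := by
      intro x hx
      simp only [hTs, hIdef, Finset.mem_filter, Finset.mem_Ico] at *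
      refine ⟨hx.1.1, ?_⟩
      have : x ≤ Nat.log p k :=
        (Nat.le_log_iff_pow_le hp.one_lt (by omega)).mpr hx.2
      omega
    calc Ts.card ≤ (Finset.Ico 1 (Nat.log p k + 1)).card := Finset.card_le_card hsub2
      _ = Nat.log p k := by rw [Nat.card_Ico]; omega
  have hlogk : Nat.log p k + 2 ≤ k := by
    set L : ℕ := Nat.log p k with hL
    rcases Nat.eq_zero_or_pos L with h0 | h0
    · omega
    · have h5 : 5 ^ L ≤ p ^ L := Nat.pow_le_pow_left hp5 L
      have hpk : p ^ L ≤ k := Nat.pow_log_le_self p (by omega)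
      have := five_pow_ge L h0
      omega
  have hTcard : T.card < k := by
    have h := Finset.card_union_le Ts Tb
    have h2 : T.card ≤ (Ts ∪ Tb).card := Finset.card_le_card hTsub
    omega
  omega
end

section
/- Let p > 3 be a prime, let ϱ ≥ 1 be an integer, and set r = ϱ(p+1)+1. Then for every integer i with ϱp < i(p−1)+ϱ ≤ r one has v_p(binom(r, ϱ)) < ((i−ϱ)(p−1)−1) + v_p(binom(r, i(p−1)+ϱ)) + v_p(binom(i−1, ϱ)). -/
open Nat Finset

/-- Auxiliary: for `5 ≤ b` and `1 ≤ L` one has `L + 2 ≤ b ^ L`. -/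
lemma aux_pow_lemma14 (b L : ℕ) (hb : 5 ≤ b) (hL : 1 ≤ L) : L + 2 ≤ b ^ L := by
  induction L with
  | zero => omega
  | succ n ih =>
    rcases Nat.eq_or_lt_of_le hL with h | h
    · simp [← h]; omega
    · have hn : 1 ≤ n := by omega
      have h1 : n + 2 ≤ b ^ n := ih hn
      have h2 : b ^ n * 5 ≤ b ^ n * b := Nat.mul_le_mul_left _ (by omega)
      have h3 : b ^ (n + 1) = b ^ n * b := pow_succ b n
      omega

/-- Lemma 14 of the paper. Let `p > 3` be a prime, `ϱ ≥ 1` an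
integer, and `r = ϱ(p+1)+1`.  Then for every integer `i` with `ϱp < i(p-1)+ϱ ≤ r` one
has `v_p(binom(r, ϱ)) < ((i-ϱ)(p-1)-1) + v_p(binom(r, i(p-1)+ϱ)) + v_p(binom(i-1, ϱ))`. -/
theorem lemma14_valuation_ineq (p r ϱ i : ℕ) (hp : p.Prime) (hp3 : 3 < p)
    (hϱ : 1 ≤ ϱ) (hrdef : r = ϱ * (p + 1) + 1)
    (hi1 : ϱ * p < i * (p - 1) + ϱ) (hi2 : i * (p - 1) + ϱ ≤ r) :
    (padicValNat p (r.choose ϱ) : ℤ)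
      < (((i : ℤ) - (ϱ : ℤ)) * ((p : ℤ) - 1) - 1)
        + (padicValNat p (r.choose (i * (p - 1) + ϱ)) : ℤ)
        + (padicValNat p ((i - 1).choose ϱ) : ℤ) := by
  haveI : Fact p.Prime := ⟨hp⟩
  have hp1 : 1 < p := hp.one_lt
  have hp4 : p ≠ 4 := by intro h; rw [h] at hp; norm_num at hp
  -- write p = q + 1, q ≥ 4
  obtain ⟨q, rfl⟩ : ∃ q, p = q + 1 := ⟨p - 1, by omega⟩
  have hq4 : 4 ≤ q := by omega
  have hq1 : q + 1 - 1 = q := by omega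
  rw [hq1] at hi1 hi2 ⊢
  -- i > ϱ
  have hik : ϱ < i := by
    by_contra h
    push_neg at h
    have h1 : i * q ≤ ϱ * q := Nat.mul_le_mul_right q h
    have h2 : ϱ * (q + 1) = ϱ * q + ϱ := by ring
    omega
  -- i = ϱ + (k' + 1)
  obtain ⟨k, rfl⟩ : ∃ k, i = ϱ + k := ⟨i - ϱ, by omega⟩
  obtain ⟨k', rfl⟩ : ∃ k', k = k' + 1 := ⟨k - 1, by omega⟩
  -- t with (k'+1)*q = t+1
  have hkq1 : 1 ≤ (k' + 1) * q := Nat.mul_pos (by omega) (by omega)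
  have hkqq : q ≤ (k' + 1) * q := Nat.le_mul_of_pos_left q (by omega)
  have hkqk : k' + 1 ≤ (k' + 1) * q := Nat.le_mul_of_pos_right (k' + 1) (by omega)
  obtain ⟨t, ht⟩ : ∃ t, (k' + 1) * q = t + 1 := ⟨(k' + 1) * q - 1, by omega⟩
  have ht3 : 3 ≤ t := by omega
  have hkt : k' ≤ t := by omega
  -- ring expansions (products as `omega` atoms)
  have e1 : (ϱ + (k' + 1)) * q = ϱ * q + (k' + 1) * q := by ring
  have e2 : ϱ * (q + 1) = ϱ * q + ϱ := by ring
  have e3 : ϱ * (q + 1 + 1) = ϱ * q + ϱ + ϱ := by ring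
  -- t ≤ ϱ
  have htϱ : t ≤ ϱ := by omega
  obtain ⟨m, hm⟩ : ∃ m, ϱ = t + m := ⟨ϱ - t, by omega⟩
  -- x = ϱ(q+1)+1, d = i*q+ϱ
  set x := ϱ * (q + 1) + 1 with hx
  set d := (ϱ + (k' + 1)) * q + ϱ with hDdef
  have hd_eq : d = t + x := by rw [hDdef, hx]; omega
  have hr_eq : r = d + m := by rw [hrdef, hDdef]; omega
  -- basic inequalities
  have htd : t ≤ d := by omega
  have hdr : d ≤ r := by omega
  have hϱr : ϱ ≤ r := by omega
  -- Step 1 : the multiplicative identity  C(r,ϱ)·C(ϱ,t) = C(r,d)·C(d,t)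
  have hmul : r.choose ϱ * ϱ.choose t = r.choose d * d.choose t := by
    rw [Nat.choose_mul htϱ, Nat.choose_mul htd]
    congr 1
    apply Nat.choose_symm_of_eq_add
    omega
  -- valuation identity
  have hv : padicValNat (q+1) (r.choose ϱ) + padicValNat (q+1) (ϱ.choose t)
      = padicValNat (q+1) (r.choose d) + padicValNat (q+1) (d.choose t) := by
    have h1 := congrArg (padicValNat (q+1)) hmul
    rwa [padicValNat.mul (Nat.choose_pos hϱr).ne' (Nat.choose_pos htϱ).ne',
      padicValNat.mul (Nat.choose_pos hdr).ne' (Nat.choose_pos htd).ne'] at h1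
  -- Step 2 : Kummer bound  v(C(d,t)) + 1 ≤ t + v(C(ϱ+k',ϱ))
  set b := Nat.log (q+1) r + 1 with hb
  have hlogd : Nat.log (q+1) d < b := by
    have := Nat.log_mono_right (b := q+1) hdr
    omega
  have hϱk'r : ϱ + k' ≤ r := by rw [hrdef]; omega
  have hlogi : Nat.log (q+1) (ϱ + k') < b := by
    have := Nat.log_mono_right (b := q+1) hϱk'r
    omega
  have hc3 : padicValNat (q+1) (d.choose t)
      = ((Finset.Ico 1 b).filter fun j => (q+1) ^ j ≤ t % (q+1) ^ j + x % (q+1) ^ j).card := by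
    have h0 := padicValNat_choose (p := q+1) (n := d) (k := t) (b := b) htd hlogd
    have hdx : d - t = x := by omega
    simpa [hdx] using h0
  have hc2 : padicValNat (q+1) ((ϱ + k').choose ϱ)
      = ((Finset.Ico 1 b).filter fun j => (q+1) ^ j ≤ ϱ % (q+1) ^ j + k' % (q+1) ^ j).card := by
    have h0 := padicValNat_choose (p := q+1) (n := ϱ + k') (k := ϱ) (b := b)
      (Nat.le_add_right _ _) hlogi
    have hdx : ϱ + k' - ϱ = k' := by omega
    simpa [hdx] using h0
  set J0 := Nat.log (q+1) t + 1 with hJ0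
  have hJ0t : J0 + 1 ≤ t := by
    rcases Nat.eq_zero_or_pos (Nat.log (q+1) t) with h0 | h0
    · omega
    · have h1 : (q+1) ^ Nat.log (q+1) t ≤ t := Nat.pow_log_le_self (q+1) (by omega)
      have h2 : Nat.log (q+1) t + 2 ≤ (q+1) ^ Nat.log (q+1) t :=
        aux_pow_lemma14 (q+1) _ (by omega) h0
      omega
  -- the key counting bound
  set S3 := (Finset.Ico 1 b).filter
      (fun j => (q+1) ^ j ≤ t % (q+1) ^ j + x % (q+1) ^ j) with hS3
  set S2 := (Finset.Ico 1 b).filter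
      (fun j => (q+1) ^ j ≤ ϱ % (q+1) ^ j + k' % (q+1) ^ j) with hS2
  have hcard : S3.card ≤ J0 + S2.card := by
    have hb1 : (S3.filter (fun j => j ≤ J0)).card ≤ J0 := by
      have hsub : S3.filter (fun j => j ≤ J0) ⊆ Finset.Ico 1 (J0 + 1) := by
        intro j hj
        simp only [hS3, Finset.mem_filter, Finset.mem_Ico] at hj ⊢
        omega
      have := Finset.card_le_card hsub
      simpa using this
    have hb2 : (S3.filter (fun j => ¬ j ≤ J0)).card ≤ S2.card := by
      apply Finset.card_le_card_of_injOn (fun j => j - 1)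
      · intro j hj
        simp only [hS3, Finset.mem_coe, Finset.mem_filter, Finset.mem_Ico] at hj
        obtain ⟨⟨⟨hj1, hjb⟩, hjpred⟩, hjJ0⟩ := hj
        -- write j = e + 1
        obtain ⟨e, rfl⟩ : ∃ e, j = e + 1 := ⟨j - 1, by omega⟩
        have heJ0 : J0 ≤ e := by omega
        -- p^J0 > t
        have h1 : t < (q+1) ^ J0 := Nat.lt_pow_succ_log_self (by omega) t
        have h2 : (q+1) ^ J0 ≤ (q+1) ^ e := Nat.pow_le_pow_right (by omega) heJ0
        have hte : t < (q+1) ^ e := lt_of_lt_of_le h1 h2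
        have hpow : (q+1) ^ (e+1) = (q+1) ^ e * (q+1) := pow_succ _ _
        have hpowpos : 0 < (q+1) ^ e := Nat.pow_pos (n := e) (by omega)
        have htj : t < (q+1) ^ (e+1) := by
          have : (q+1) ^ e * 1 ≤ (q+1) ^ e * (q+1) := Nat.mul_le_mul_left _ (by omega)
          omega
        -- compute x % p^(e+1)
        set R := ϱ % (q+1) ^ e with hR
        have hRlt : R < (q+1) ^ e := Nat.mod_lt _ hpowpos
        have hxsplit : x = (ϱ / (q+1) ^ e) * (q+1) ^ (e+1) + (R * (q+1) + 1) := by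
          rw [hx, hR]
          conv_lhs => rw [← Nat.div_add_mod ϱ ((q+1) ^ e)]
          ring
        have hxlt : R * (q+1) + 1 < (q+1) ^ (e+1) := by
          have h3 : (R + 1) * (q+1) ≤ (q+1) ^ e * (q+1) :=
            Nat.mul_le_mul_right _ (by omega)
          have e4 : (R + 1) * (q+1) = R * (q+1) + q + 1 := by ring
          omega
        have hxmod : x % (q+1) ^ (e+1) = R * (q+1) + 1 := by
          rw [hxsplit, Nat.mul_comm, Nat.mul_add_mod, Nat.mod_eq_of_lt hxlt]
        have htmod : t % (q+1) ^ (e+1) = t := Nat.mod_eq_of_lt htj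
        rw [htmod, hxmod] at hjpred
        -- now hjpred : (q+1)^(e+1) ≤ t + (R*(q+1)+1)
        simp only [hS2, Finset.mem_coe, Finset.mem_filter, Finset.mem_Ico]
        have hsub1 : e + 1 - 1 = e := by omega
        rw [hsub1]
        refine ⟨⟨by omega, by omega⟩, ?_⟩
        have hk'mod : k' % (q+1) ^ e = k' := Nat.mod_eq_of_lt (by omega)
        rw [← hR, hk'mod]
        -- show (q+1)^e ≤ R + k'
        by_contra hcon
        push_neg at hcon
        have h5 : R + (k' + 1) ≤ (q+1) ^ e := by omega
        have h6 : (R + (k' + 1)) * (q+1) ≤ (q+1) ^ e * (q+1) :=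
          Nat.mul_le_mul_right _ h5
        have e5 : (R + (k' + 1)) * (q+1) = R * (q+1) + (k' + 1) * q + (k' + 1) := by ring
        omega
      · intro j1 hj1 j2 hj2 hj12
        simp only [hS3, Finset.coe_filter, Set.mem_setOf_eq, Finset.mem_filter,
          Finset.mem_Ico] at hj1 hj2
        change j1 - 1 = j2 - 1 at hj12
        omega
    calc S3.card
        = (S3.filter (fun j => j ≤ J0)).card + (S3.filter (fun j => ¬ j ≤ J0)).card :=
          (Finset.card_filter_add_card_filter_not (fun j => j ≤ J0)).symm
      _ ≤ J0 + S2.card := Nat.add_le_add hb1 hb2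
  -- assemble: v(C(d,t)) + 1 ≤ t + v(C(ϱ+k',ϱ))
  have hfin : padicValNat (q+1) (d.choose t) + 1
      ≤ t + padicValNat (q+1) ((ϱ + k').choose ϱ) := by
    rw [hc3, hc2]
    omega
  -- rewrite the goal
  have hgoal2 : ϱ + (k' + 1) - 1 = ϱ + k' := by omega
  rw [hgoal2]
  -- final integer arithmetic
  have hvZ : (padicValNat (q+1) (r.choose ϱ) : ℤ) + (padicValNat (q+1) (ϱ.choose t) : ℤ)
      = (padicValNat (q+1) (r.choose d) : ℤ) + (padicValNat (q+1) (d.choose t) : ℤ) := by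
    exact_mod_cast congrArg (fun n : ℕ => (n : ℤ)) hv
  have hfinZ : (padicValNat (q+1) (d.choose t) : ℤ) + 1
      ≤ (t : ℤ) + (padicValNat (q+1) ((ϱ + k').choose ϱ) : ℤ) := by
    exact_mod_cast hfin
  have htZ : ((k' : ℤ) + 1) * ((q : ℤ)) = (t : ℤ) + 1 := by exact_mod_cast ht
  have hcast : ((((ϱ + (k' + 1) : ℕ)) : ℤ) - (ϱ : ℤ)) * ((((q + 1 : ℕ)) : ℤ) - 1) - 1
      = (t : ℤ) := by
    push_cast
    linear_combination htZ
  have hnn : (0 : ℤ) ≤ (padicValNat (q+1) (ϱ.choose t) : ℤ) := Int.ofNat_nonneg _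
  linarith [hvZ, hfinZ, hcast, hnn]
end

section
/- Let p be a prime and let n ≥ 0 and l ≥ 1 be integers. Then (∑_{i=1}^{l} v_p(n+i)) − max_{1 ≤ i ≤ l} v_p(n+i) ≤ (l−1)/(p−1); that is, among any l consecutive positive integers, the sum of the p-adic valuations of all terms except one term of maximal valuation is at most (l−1)/(p−1). -/
open Finset

/-- Auxiliary: floor-div bound `(n + l) / d ≤ n / d + (l - 1) / d + 1`. -/
lemma aux_div_bound (n l d : ℕ) (hd : 0 < d) (hl : 1 ≤ l) :
    (n + l) / d ≤ n / d + (l - 1) / d + 1 := by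
  have h1 := Nat.div_add_mod n d
  have h2 := Nat.div_add_mod (l - 1) d
  have h3 := Nat.mod_lt n hd
  have h4 := Nat.mod_lt (l - 1) hd
  have h5 : (n + l) / d < n / d + (l - 1) / d + 2 := by
    rw [Nat.div_lt_iff_lt_mul hd]
    have hl' : l - 1 + 1 = l := by omega
    nlinarith [h1, h2, h3, h4, hl']
  omega

/-- Auxiliary: the number of multiples of `d` in `Ioc n (n+l)` is `(n+l)/d - n/d`. -/
lemma aux_count (n l d : ℕ) :
    ((Ioc n (n + l)).filter (d ∣ ·)).card = (n + l) / d - n / d := by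
  have hsub : (Ioc 0 n).filter (d ∣ ·) ⊆ (Ioc 0 (n + l)).filter (d ∣ ·) := by
    apply Finset.filter_subset_filter
    exact Finset.Ioc_subset_Ioc le_rfl (Nat.le_add_right _ _)
  have hunion : (Ioc 0 n ∪ Ioc n (n + l)) = Ioc 0 (n + l) :=
    Finset.Ioc_union_Ioc_eq_Ioc (Nat.zero_le _) (Nat.le_add_right _ _)
  have hdisj : Disjoint ((Ioc 0 n).filter (d ∣ ·)) ((Ioc n (n + l)).filter (d ∣ ·)) := by
    rw [Finset.disjoint_left]
    intro x hx hx2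
    simp only [Finset.mem_filter, Finset.mem_Ioc] at hx hx2
    omega
  have hcards : n / d + ((Ioc n (n + l)).filter (d ∣ ·)).card = (n + l) / d := by
    rw [← Nat.Ioc_filter_dvd_card_eq_div n d, ← Nat.Ioc_filter_dvd_card_eq_div (n + l) d,
      ← hunion, Finset.filter_union, Finset.card_union_of_disjoint hdisj]
  omega

/-- Auxiliary: count of `i ∈ [1,l]` with `p^k ∣ n + i` is at most `(l-1)/p^k + 1`. -/
lemma aux_count_bound (p n l k : ℕ) (hp : 0 < p) (hl : 1 ≤ l) :
    ((Icc 1 l).filter (fun i => p ^ k ∣ n + i)).card ≤ (l - 1) / p ^ k + 1 := by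
  have hd : 0 < p ^ k := Nat.pow_pos hp
  have himg : (Icc 1 l).image (fun i => n + i) = Ioc n (n + l) := by
    ext x
    simp only [Finset.mem_image, Finset.mem_Icc, Finset.mem_Ioc]
    constructor
    · rintro ⟨i, ⟨h1, h2⟩, rfl⟩; omega
    · intro ⟨h1, h2⟩; exact ⟨x - n, by omega, by omega⟩
  have hcard : ((Icc 1 l).filter (fun i => p ^ k ∣ n + i)).card
      = ((Ioc n (n + l)).filter (p ^ k ∣ ·)).card := by
    rw [← himg, Finset.filter_image, Finset.card_image_of_injOn]
    intro a _ b _ h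
    exact Nat.add_left_cancel h
  have hb := aux_div_bound n l (p ^ k) hd hl
  rw [hcard, aux_count, tsub_le_iff_left]
  linarith

/-- Let `p` be a prime and `n ≥ 0`, `l ≥ 1` integers.  Then
`(∑_{i=1}^{l} v_p(n+i)) − max_{1 ≤ i ≤ l} v_p(n+i) ≤ (l−1)/(p−1)`: among any `l`
consecutive positive integers, the sum of the `p`-adic valuations of all terms except
one term of maximal valuation is at most `(l−1)/(p−1)`. -/
theorem sum_valuations_minus_max (p n l : ℕ) (hp : p.Prime) (hl : 1 ≤ l) :
    ((∑ i ∈ Finset.Icc 1 l, padicValNat p (n + i) : ℕ) : ℚ)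
        - (((Finset.Icc 1 l).sup (fun i => padicValNat p (n + i)) : ℕ) : ℚ)
      ≤ ((l : ℚ) - 1) / ((p : ℚ) - 1) := by
  haveI : Fact p.Prime := ⟨hp⟩
  set K := (Finset.Icc 1 l).sup (fun i => padicValNat p (n + i)) with hK
  set S := ∑ i ∈ Finset.Icc 1 l, padicValNat p (n + i) with hS
  -- Step 1: S = ∑_{k ∈ Icc 1 K} count_k
  have h1 : S = ∑ k ∈ Icc 1 K, ((Icc 1 l).filter (fun i => p ^ k ∣ n + i)).card := by
    rw [hS]
    have hv : ∀ i ∈ Icc 1 l, padicValNat p (n + i)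
        = ((Icc 1 K).filter (fun k => p ^ k ∣ n + i)).card := by
      intro i hi
      have hi1 : 1 ≤ i := (Finset.mem_Icc.mp hi).1
      have hne : n + i ≠ 0 := by omega
      have hle : padicValNat p (n + i) ≤ K := Finset.le_sup (f := fun i => padicValNat p (n + i)) hi
      have hfe : (Icc 1 K).filter (fun k => p ^ k ∣ n + i) = Icc 1 (padicValNat p (n + i)) := by
        ext k
        simp only [Finset.mem_filter, Finset.mem_Icc, padicValNat_dvd_iff_le hne]
        omega
      rw [hfe, Nat.card_Icc]
      omega
    rw [Finset.sum_congr rfl hv]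
    simp only [Finset.card_filter]
    rw [Finset.sum_comm]
  -- Step 2: each count is at most (l-1)/p^k + 1
  have h2 : S ≤ (∑ k ∈ Icc 1 K, (l - 1) / p ^ k) + K := by
    calc S ≤ ∑ k ∈ Icc 1 K, ((l - 1) / p ^ k + 1) := by
            rw [h1]
            exact Finset.sum_le_sum fun k _ => aux_count_bound p n l k hp.pos hl
      _ = (∑ k ∈ Icc 1 K, (l - 1) / p ^ k) + K := by
            rw [Finset.sum_add_distrib, Finset.sum_const, Nat.card_Icc, smul_eq_mul, mul_one]
            omega
  -- Step 3: geometric sum bound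
  have h3 : (∑ k ∈ Icc 1 K, (l - 1) / p ^ k) ≤ (l - 1) / (p - 1) := by
    have : Icc 1 K = Ico 1 (K + 1) := by rw [Finset.Ico_add_one_right_eq_Icc]
    rw [this]
    exact Nat.geom_sum_Ico_le hp.two_le (l - 1) (K + 1)
  have h4 : S ≤ (l - 1) / (p - 1) + K := le_trans h2 (by omega)
  -- Step 4: cast to ℚ
  have hq : ((S : ℚ)) - (K : ℚ) ≤ (((l - 1) / (p - 1) : ℕ) : ℚ) := by
    have := (Nat.cast_le (α := ℚ)).mpr h4
    push_cast at this ⊢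
    linarith
  refine hq.trans ?_
  have h5 : (((l - 1) / (p - 1) : ℕ) : ℚ) ≤ ((l - 1 : ℕ) : ℚ) / ((p - 1 : ℕ) : ℚ) :=
    Nat.cast_div_le
  refine h5.trans ?_
  rw [Nat.cast_sub hl, Nat.cast_sub hp.one_le]
  simp
end

section
/- Let p > 3 be a prime, let r and α be integers with 1 ≤ α ≤ r−1, set ϱ' = ⌈(r−α)/p⌉ − 1, and let j ≥ 1 be an integer. Then v_p(∏_{s=1}^{j(p−1)} (r−α+s)) ≤ v_p(∏_{s=1}^{j} (ϱ'+s)) + ⌊(j(p−1)+p−1)/p⌋. -/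
open Finset Nat

private lemma factorial_mul_prod_Icc (a n : ℕ) :
    a ! * ∏ s ∈ Finset.Icc 1 n, (a + s) = (a + n)! := by
  induction n with
  | zero => simp
  | succ n ih =>
    rw [Finset.prod_Icc_succ_top (by omega), ← mul_assoc, ih, ← Nat.add_assoc,
      Nat.factorial_succ, mul_comm]

private lemma prod_Icc_ne_zero (a n : ℕ) :
    (∏ s ∈ Finset.Icc 1 n, (a + s)) ≠ 0 := by
  rw [Finset.prod_ne_zero_iff]
  intro i hi
  simp only [Finset.mem_Icc] at hi
  omega

private lemma val_prod_Icc (p : ℕ) [Fact p.Prime] (a n : ℕ) :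
    padicValNat p (a !) + padicValNat p (∏ s ∈ Finset.Icc 1 n, (a + s))
      = padicValNat p ((a + n)!) := by
  rw [← padicValNat.mul (Nat.factorial_ne_zero a) (prod_Icc_ne_zero a n),
    factorial_mul_prod_Icc]

private lemma prod_Icc_shift (a n : ℕ) :
    ∏ s ∈ Finset.Icc 1 n, (a + s) = ∏ t ∈ Finset.Ioc a (a + n), t := by
  have h : Finset.Ioc a (a + n) = (Finset.Ioc 0 n).map (addLeftEmbedding a) := by
    rw [Finset.map_add_left_Ioc, Nat.add_zero]
  rw [h, Finset.prod_map]
  rw [show Finset.Icc 1 n = Finset.Ioc 0 n from Finset.Icc_add_one_left_eq_Ioc 0 n]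
  rfl

private lemma val_le_of_dvd' {p a b : ℕ} [Fact p.Prime] (hb : b ≠ 0) (h : a ∣ b) :
    padicValNat p a ≤ padicValNat p b := by
  have ha : a ≠ 0 := fun h0 => hb (by simpa [h0] using h)
  exact (padicValNat_dvd_iff_le hb).mp ((pow_padicValNat_dvd (p := p) (n := a)).trans h)

private lemma val_factorial_between {p a x y b : ℕ} [Fact p.Prime]
    (h1 : a ≤ x) (h2 : x ≤ y) (h3 : y ≤ b) :
    padicValNat p (y !) + padicValNat p (a !)
      ≤ padicValNat p (b !) + padicValNat p (x !) := by
  have e1 := val_prod_Icc p x (y - x)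
  have e2 := val_prod_Icc p a (b - a)
  rw [show x + (y - x) = y by omega] at e1
  rw [show a + (b - a) = b by omega] at e2
  have hdvd : (∏ s ∈ Finset.Icc 1 (y - x), (x + s)) ∣
      (∏ s ∈ Finset.Icc 1 (b - a), (a + s)) := by
    rw [prod_Icc_shift, prod_Icc_shift, show x + (y - x) = y by omega,
      show a + (b - a) = b by omega]
    exact Finset.prod_dvd_prod_of_subset _ _ _ (Finset.Ioc_subset_Ioc h1 h3)
  have hle := val_le_of_dvd' (p := p) (prod_Icc_ne_zero a (b - a)) hdvd
  omega

private lemma val_factorial_rec (p : ℕ) [Fact p.Prime] (n : ℕ) :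
    padicValNat p (n !) = n / p + padicValNat p ((n / p)!) := by
  have h1 := padicValNat_mul_div_factorial (p := p) n
  have h2 := padicValNat_factorial_mul (p := p) (n / p)
  omega

/-- Let `p > 3` be a prime, `r` and `α` integers with `1 ≤ α ≤ r-1`,
set `ϱ' = ⌈(r-α)/p⌉ - 1`, and let `j ≥ 1` be an integer.  Then
`v_p(∏_{s=1}^{j(p-1)} (r-α+s)) ≤ v_p(∏_{s=1}^{j} (ϱ'+s)) + ⌊(j(p-1)+p-1)/p⌋`. -/
theorem valuation_product_bound (p r α j : ℕ) (hp : p.Prime) (hp3 : 3 < p)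
    (hα1 : 1 ≤ α) (hαr : α ≤ r - 1) (hj : 1 ≤ j) :
    padicValNat p (∏ s ∈ Finset.Icc 1 (j * (p - 1)), (r - α + s))
      ≤ padicValNat p (∏ s ∈ Finset.Icc 1 j, ((r - α + p - 1) / p - 1 + s))
        + (j * (p - 1) + p - 1) / p := by
  haveI : Fact p.Prime := ⟨hp⟩
  set m := r - α with hm_def
  have hm : 1 ≤ m := by omega
  have hppos : 0 < p := by omega
  set J := j * (p - 1) with hJ_def
  -- ϱ' = (m-1)/p
  have hρ : (m + p - 1) / p - 1 = (m - 1) / p := by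
    rw [show m + p - 1 = (m - 1) + p by omega, Nat.add_div_right _ hppos, Nat.add_sub_cancel]
  rw [hρ]
  set ρ := (m - 1) / p with hρ_def
  have key1 := val_prod_Icc p m J
  have key2 := val_prod_Icc p ρ j
  have rec1 := val_factorial_rec p (m + J)
  have rec2 := val_factorial_rec p m
  -- arithmetic facts
  have f1 : ρ ≤ m / p := Nat.div_le_div_right (by omega)
  have f2 : m / p ≤ (m + J) / p := Nat.div_le_div_right (by omega)
  have f3 : (m + J) / p ≤ ρ + j := by
    have hmul : j * p = J + j := by
      rw [hJ_def, ← Nat.mul_succ]; congr 1; omega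
    have hJ' : m + J ≤ (m - 1) + j * p := by omega
    calc (m + J) / p ≤ ((m - 1) + j * p) / p := Nat.div_le_div_right hJ'
      _ = ρ + j := by rw [Nat.add_mul_div_right _ _ hppos]
  have f4 : (m + J) / p ≤ m / p + (J + p - 1) / p := by
    have hmp : m = p * (m / p) + m % p := (Nat.div_add_mod m p).symm
    have hlt : m % p < p := Nat.mod_lt m hppos
    calc (m + J) / p = (p * (m / p) + (m % p + J)) / p := by rw [← Nat.add_assoc, ← hmp]
      _ = m / p + (m % p + J) / p := Nat.mul_add_div hppos _ _
      _ ≤ m / p + (J + p - 1) / p := by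
          exact Nat.add_le_add_left (Nat.div_le_div_right (by omega)) _
  have between := val_factorial_between (p := p) f1 f2 f3
  have rec3 := val_factorial_rec p (m + J)
  omega
end
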